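/- Let 𝒮 be a split system on a finite set X with |X| ≥ 5. Then 𝒮 both 4-dices and 5-dices X if and only if for all distinct 3-subsets A, B of X with A ∩ B ≠ ∅ there exists S ∈ 𝒮 with φ_A(S) ≠ φ_B(S). -/

import Mathlib

namespace InjectiveSplitSystems

open Finset

variable {α : Type*} [DecidableEq α]

/-- A split of `X`: an unordered bipartition of `X` into two nonempty disjoint parts,
represented as the two-element set `{A, B}` of its parts. -/
def IsSplit (X : Finset α) (S : Finset (Finset α)) : Prop :=
  ∃ A B : Finset α, S = {A, B} ∧ A ∪ B = X ∧ A ∩ B = ∅ ∧ A ≠ ∅ ∧ B ≠ ∅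

/-- `S` is an `r`-split of `X`: a split of `X` whose minimum part size is `r`. -/
def IsRSplit (X : Finset α) (r : ℕ) (S : Finset (Finset α)) : Prop :=
  IsSplit X S ∧ (∃ A ∈ S, A.card = r) ∧ ∀ A ∈ S, r ≤ A.card

/-- A split system on `X`: a set of splits of `X` containing all trivial splits
`{x} | X \ {x}`, `x ∈ X`. -/
def IsSplitSystem (X : Finset α) (𝒮 : Finset (Finset (Finset α))) : Prop :=
  (∀ S ∈ 𝒮, IsSplit X S) ∧ ∀ x ∈ X, ({{x}, X \ {x}} : Finset (Finset α)) ∈ 𝒮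

/-- `phiNe Y Y' S` says `φ_Y(S) ≠ φ_{Y'}(S)`: the part of `S` containing at least two
elements of the 3-set `Y` differs from the part of `S` containing at least two
elements of the 3-set `Y'`. -/
def phiNe (Y Y' : Finset α) (S : Finset (Finset α)) : Prop :=
  ∃ t ∈ S, ∃ t' ∈ S, t ≠ t' ∧ 2 ≤ (Y ∩ t).card ∧ 2 ≤ (Y' ∩ t').card

/-- A split system on `X` is injective if for all distinct 3-subsets `Y`, `Y'` of `X`
there is a split `S ∈ 𝒮` with `φ_Y(S) ≠ φ_{Y'}(S)`. -/
def IsInjective (X : Finset α) (𝒮 : Finset (Finset (Finset α))) : Prop :=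
  ∀ Y Y' : Finset α, Y ⊆ X → Y' ⊆ X → Y.card = 3 → Y'.card = 3 → Y ≠ Y' →
    ∃ S ∈ 𝒮, phiNe Y Y' S

/-- The restriction `S|_Y` of a split to `Y`, as the set of restricted parts. -/
def restrictSplit (S : Finset (Finset α)) (Y : Finset α) : Finset (Finset α) :=
  S.image (· ∩ Y)

open scoped Classical in
/-- The restriction `𝒮|_Y` of a split system to `Y`: all splits
`(A ∩ Y) | (B ∩ Y)` with `A|B ∈ 𝒮` and both intersections nonempty. -/
noncomputable def restrictSS (𝒮 : Finset (Finset (Finset α))) (Y : Finset α) :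
    Finset (Finset (Finset α)) :=
  (𝒮.image fun S => restrictSplit S Y).filter fun T => ∀ t ∈ T, t ≠ ∅

/-- `𝒮` 4-dices `X`. -/
def FourDices (X : Finset α) (𝒮 : Finset (Finset (Finset α))) : Prop :=
  X.card < 4 ∨ ∀ Y ⊆ X, Y.card = 4 →
    ∃ 𝒯 ⊆ restrictSS 𝒮 Y, 2 ≤ 𝒯.card ∧ ∀ S ∈ 𝒯, IsRSplit Y 2 S

/-- `𝒮` 5-dices `X`. -/
def FiveDices (X : Finset α) (𝒮 : Finset (Finset (Finset α))) : Prop :=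
  X.card < 5 ∨ ∀ Y ⊆ X, Y.card = 5 →
    ∃ 𝒯 ⊆ restrictSS 𝒮 Y, 5 ≤ 𝒯.card ∧ ∀ S ∈ 𝒯, IsRSplit Y 2 S

/-- `𝒮` 6-dices `X`: every 6-subset restriction contains a 3-split or a triangle
of 2-splits. -/
def SixDices (X : Finset α) (𝒮 : Finset (Finset (Finset α))) : Prop :=
  X.card < 6 ∨ ∀ Y ⊆ X, Y.card = 6 →
    (∃ S ∈ restrictSS 𝒮 Y, IsRSplit Y 3 S) ∨
    (∃ x ∈ Y, ∃ y ∈ Y, ∃ z ∈ Y, x ≠ y ∧ x ≠ z ∧ y ≠ z ∧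
      ({{x, y}, Y \ {x, y}} : Finset (Finset α)) ∈ restrictSS 𝒮 Y ∧
      ({{x, z}, Y \ {x, z}} : Finset (Finset α)) ∈ restrictSS 𝒮 Y ∧
      ({{y, z}, Y \ {y, z}} : Finset (Finset α)) ∈ restrictSS 𝒮 Y)

/-- Two splits are incompatible if they are distinct and all four pairwise
intersections of their parts are nonempty. -/
def Incompatible (S T : Finset (Finset α)) : Prop :=
  S ≠ T ∧ ∀ A ∈ S, ∀ B ∈ T, A ∩ B ≠ ∅

open scoped Classical in
/-- The dimension of a split system: maximum size of a pairwise incompatible subset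
(which is `1` when all splits are pairwise compatible and `𝒮` is nonempty). -/
noncomputable def dimSS (𝒮 : Finset (Finset (Finset α))) : ℕ :=
  (𝒮.powerset.filter fun 𝒯 => ∀ S ∈ 𝒯, ∀ T ∈ 𝒯, S ≠ T → Incompatible S T).sup Finset.card

/-- The injective dimension `ID(n)`: minimum dimension of an injective split system
on `{1, …, n}`. -/
noncomputable def ID (n : ℕ) : ℕ :=
  sInf {d : ℕ | ∃ 𝒮 : Finset (Finset (Finset ℕ)),
    IsSplitSystem (Finset.Icc 1 n) 𝒮 ∧ IsInjective (Finset.Icc 1 n) 𝒮 ∧ dimSS 𝒮 = d}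

/-- The injective 2-split dimension `ID₂(n)`: minimum dimension of an injective split
system on `{1, …, n}` all of whose non-trivial splits have size 2. -/
noncomputable def ID2 (n : ℕ) : ℕ :=
  sInf {d : ℕ | ∃ 𝒮 : Finset (Finset (Finset ℕ)),
    IsSplitSystem (Finset.Icc 1 n) 𝒮 ∧ IsInjective (Finset.Icc 1 n) 𝒮 ∧
    (∀ S ∈ 𝒮, IsRSplit (Finset.Icc 1 n) 1 S ∨ IsRSplit (Finset.Icc 1 n) 2 S) ∧
    dimSS 𝒮 = d}

/-- `𝒮` is rooted-injective relative to `r`. -/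
def IsRootedInjective (X : Finset α) (r : α) (𝒮 : Finset (Finset (Finset α))) : Prop :=
  ∀ Z Z' : Finset α, Z ⊆ X \ {r} → Z' ⊆ X \ {r} → Z.card = 2 → Z'.card = 2 → Z ≠ Z' →
    ∃ S ∈ 𝒮, phiNe (insert r Z) (insert r Z') S

/-- The rooted-injective dimension `ID^r(n)`: minimum dimension of a split system on an
`n`-element set that is rooted-injective relative to a given element. -/
noncomputable def IDr (n : ℕ) : ℕ :=
  sInf {d : ℕ | ∃ 𝒮 : Finset (Finset (Finset ℕ)),
    IsSplitSystem (Finset.Icc 1 n) 𝒮 ∧ IsRootedInjective (Finset.Icc 1 n) 1 𝒮 ∧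
    dimSS 𝒮 = d}

/-- `𝒮` is circular: there is a labelling `x_1, …, x_n` of `X` such that every split
of `𝒮` has the form `{x_i, …, x_j} | complement`. -/
def IsCircular (X : Finset α) (𝒮 : Finset (Finset (Finset α))) : Prop :=
  ∃ f : ℕ → α, Set.InjOn f ↑(Finset.Icc 1 X.card) ∧
    (Finset.Icc 1 X.card).image f = X ∧
    ∀ S ∈ 𝒮, ∃ i j : ℕ, 1 ≤ i ∧ i ≤ j ∧ j ≤ X.card ∧
      S = {(Finset.Icc i j).image f, X \ (Finset.Icc i j).image f}

/-- `𝒮` is maximal circular: circular and not properly contained in any circular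
split system on `X`. -/
def IsMaximalCircular (X : Finset α) (𝒮 : Finset (Finset (Finset α))) : Prop :=
  IsCircular X 𝒮 ∧ ∀ 𝒮' : Finset (Finset (Finset α)),
    IsSplitSystem X 𝒮' → IsCircular X 𝒮' → 𝒮 ⊆ 𝒮' → 𝒮' = 𝒮

/-- The degree of `x` in the graph `P(𝒮)` on vertex set `X` whose edges are the
pairs `{x, y}` with `xy | X − {x,y} ∈ 𝒮`. -/
def degP (X : Finset α) (𝒮 : Finset (Finset (Finset α))) (x : α) : ℕ :=
  ((X \ {x}).filter fun y => ({{x, y}, X \ {x, y}} : Finset (Finset α)) ∈ 𝒮).card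

/-- `P(𝒮)` contains a 3-clique. -/
def HasTriangle (X : Finset α) (𝒮 : Finset (Finset (Finset α))) : Prop :=
  ∃ x ∈ X, ∃ y ∈ X, ∃ z ∈ X, x ≠ y ∧ x ≠ z ∧ y ≠ z ∧
    ({{x, y}, X \ {x, y}} : Finset (Finset α)) ∈ 𝒮 ∧
    ({{x, z}, X \ {x, z}} : Finset (Finset α)) ∈ 𝒮 ∧
    ({{y, z}, X \ {y, z}} : Finset (Finset α)) ∈ 𝒮

/-- Conditions (B1) and (B2) for a map to be a vertex of the Buneman graph. -/
def IsBunemanVertex (𝒮 : Finset (Finset (Finset α))) (φ : {S // S ∈ 𝒮} → Finset α) : Prop :=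
  (∀ S, φ S ∈ S.1) ∧ ∀ S S', S ≠ S' → (φ S ∩ φ S').Nonempty

/-- The vertex set of the Buneman graph `B(𝒮)`. -/
abbrev BunemanVertex (𝒮 : Finset (Finset (Finset α))) : Type _ :=
  {φ : {S // S ∈ 𝒮} → Finset α // IsBunemanVertex 𝒮 φ}

/-- The Buneman graph `B(𝒮)`: two vertices are adjacent iff they differ on exactly
one split. -/
def BunemanGraph (𝒮 : Finset (Finset (Finset α))) : SimpleGraph (BunemanVertex 𝒮) where
  Adj φ ψ := ∃! S, φ.1 S ≠ ψ.1 S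
  symm := by
    constructor
    rintro φ ψ ⟨S, hS, hU⟩
    exact ⟨S, hS.symm, fun T hT => hU T hT.symm⟩
  loopless := by
    constructor
    rintro φ ⟨S, hS, -⟩
    exact hS rfl

/-- `m` is a median of `u`, `v`, `w` in the graph `G`. -/
def IsMedian {V : Type*} (G : SimpleGraph V) (u v w m : V) : Prop :=
  G.dist u m + G.dist m v = G.dist u v ∧
  G.dist v m + G.dist m w = G.dist v w ∧
  G.dist u m + G.dist m w = G.dist u w


set_option maxHeartbeats 1000000 in
lemma boolL5 : ∀ b0 b1 b2 b3 b4 b5 b6 b7 b8 b9 : Bool,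
    ((b1 || b2 || b4 || b5) && (b1 || b3 || b4 || b6) && (b0 || b2 || b4 || b7) && (b0 || b3 || b4 || b8) && (b0 || b1 || b2 || b3 || b4 || b9) && (b0 || b1 || b5 || b7) && (b0 || b1 || b6 || b8) && (b0 || b1 || b4 || b5 || b6 || b9) && (b0 || b1 || b4 || b7 || b8 || b9) && (b2 || b3 || b5 || b6) && (b0 || b1 || b5 || b7) && (b0 || b1 || b2 || b3 || b5 || b8) && (b0 || b3 || b5 || b9) && (b0 || b2 || b4 || b7) && (b0 || b2 || b4 || b5 || b6 || b8) && (b0 || b2 || b6 || b9) && (b0 || b2 || b5 || b7 || b8 || b9) && (b0 || b1 || b2 || b3 || b6 || b7) && (b0 || b1 || b6 || b8) && (b0 || b2 || b6 || b9) && (b0 || b3 || b4 || b5 || b6 || b7) && (b0 || b3 || b4 || b8) && (b0 || b3 || b5 || b9) && (b0 || b3 || b6 || b7 || b8 || b9) && (b2 || b3 || b7 || b8) && (b1 || b3 || b7 || b9) && (b1 || b2 || b4 || b5) && (b1 || b2 || b4 || b6 || b7 || b8) && (b1 || b2 || b5 || b6 || b7 || b9) && (b1 || b2 || b8 || b9)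 && (b1 || b2 || b8 || b9) && (b1 || b3 || b4 || b5 || b7 || b8) && (b1 || b3 || b4 || b6) && (b1 || b3 || b5 || b6 || b8 || b9) && (b1 || b3 || b7 || b9) && (b2 || b3 || b4 || b5 || b7 || b9) && (b2 || b3 || b4 || b6 || b8 || b9) && (b2 || b3 || b5 || b6) && (b2 || b3 || b7 || b8) && (b5 || b6 || b7 || b8) && (b4 || b6 || b7 || b9) && (b4 || b5 || b8 || b9) && (b4 || b5 || b8 || b9) && (b4 || b6 || b7 || b9) && (b5 || b6 || b7 || b8)) = true →
    5 ≤ b0.toNat + b1.toNat + b2.toNat + b3.toNat + b4.toNat + b5.toNat + b6.toNat + b7.toNat + b8.toNat + b9.toNat := by decide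
set_option maxHeartbeats 2000000 in
lemma L5 (F : Finset (Finset (Fin 5))) (hF : ∀ s ∈ F, s.card = 2)
    (h : ∀ A B : Finset (Fin 5), A.card = 3 → B.card = 3 → A ≠ B → (A ∩ B).Nonempty →
      ∃ s ∈ F, (s ⊆ A ∧ ¬ s ⊆ B) ∨ (s ⊆ B ∧ ¬ s ⊆ A)) : 5 ≤ F.card := by
  have c0 : (decide (({0,2} : Finset (Fin 5)) ∈ F) || decide (({0,3} : Finset (Fin 5)) ∈ F) || decide (({1,2} : Finset (Fin 5)) ∈ F) || decide (({1,3} : Finset (Fin 5)) ∈ F)) = true := by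
    obtain ⟨s, hs, hc⟩ := h ({0,1,2} : Finset (Fin 5)) ({0,1,3} : Finset (Fin 5)) (by decide) (by decide) (by decide) (by decide)
    have hd := (show ∀ t : Finset (Fin 5), t.card = 2 → ((t ⊆ ({0,1,2} : Finset (Fin 5)) ∧ ¬ t ⊆ ({0,1,3} : Finset (Fin 5))) ∨ (t ⊆ ({0,1,3} : Finset (Fin 5)) ∧ ¬ t ⊆ ({0,1,2} : Finset (Fin 5)))) → (t = ({0,2} : Finset (Fin 5)) ∨ t = ({0,3} : Finset (Fin 5)) ∨ t = ({1,2} : Finset (Fin 5)) ∨ t = ({1,3} : Finset (Fin 5))) by decide) s (hF s hs) hc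
    rcases hd with rfl|rfl|rfl|rfl <;> simp [hs]
  have c1 : (decide (({0,2} : Finset (Fin 5)) ∈ F) || decide (({0,4} : Finset (Fin 5)) ∈ F) || decide (({1,2} : Finset (Fin 5)) ∈ F) || decide (({1,4} : Finset (Fin 5)) ∈ F)) = true := by
    obtain ⟨s, hs, hc⟩ := h ({0,1,2} : Finset (Fin 5)) ({0,1,4} : Finset (Fin 5)) (by decide) (by decide) (by decide) (by decide)
    have hd := (show ∀ t : Finset (Fin 5), t.card = 2 → ((t ⊆ ({0,1,2} : Finset (Fin 5)) ∧ ¬ t ⊆ ({0,1,4} : Finset (Fin 5))) ∨ (t ⊆ ({0,1,4} : Finset (Fin 5)) ∧ ¬ t ⊆ ({0,1,2} : Finset (Fin 5)))) → (t = ({0,2} : Finset (Fin 5)) ∨ t = ({0,4} : Finset (Fin 5)) ∨ t = ({1,2} : Finset (Fin 5)) ∨ t = ({1,4} : Finset (Fin 5))) by decide) s (hF s hs) hc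
    rcases hd with rfl|rfl|rfl|rfl <;> simp [hs]
  have c2 : (decide (({0,1} : Finset (Fin 5)) ∈ F) || decide (({0,3} : Finset (Fin 5)) ∈ F) || decide (({1,2} : Finset (Fin 5)) ∈ F) || decide (({2,3} : Finset (Fin 5)) ∈ F)) = true := by
    obtain ⟨s, hs, hc⟩ := h ({0,1,2} : Finset (Fin 5)) ({0,2,3} : Finset (Fin 5)) (by decide) (by decide) (by decide) (by decide)
    have hd := (show ∀ t : Finset (Fin 5), t.card = 2 → ((t ⊆ ({0,1,2} : Finset (Fin 5)) ∧ ¬ t ⊆ ({0,2,3} : Finset (Fin 5))) ∨ (t ⊆ ({0,2,3} : Finset (Fin 5)) ∧ ¬ t ⊆ ({0,1,2} : Finset (Fin 5)))) → (t = ({0,1} : Finset (Fin 5)) ∨ t = ({0,3} : Finset (Fin 5)) ∨ t = ({1,2} : Finset (Fin 5)) ∨ t = ({2,3} : Finset (Fin 5))) by decide) s (hF s hs) hc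
    rcases hd with rfl|rfl|rfl|rfl <;> simp [hs]
  have c3 : (decide (({0,1} : Finset (Fin 5)) ∈ F) || decide (({0,4} : Finset (Fin 5)) ∈ F) || decide (({1,2} : Finset (Fin 5)) ∈ F) || decide (({2,4} : Finset (Fin 5)) ∈ F)) = true := by
    obtain ⟨s, hs, hc⟩ := h ({0,1,2} : Finset (Fin 5)) ({0,2,4} : Finset (Fin 5)) (by decide) (by decide) (by decide) (by decide)
    have hd := (show ∀ t : Finset (Fin 5), t.card = 2 → ((t ⊆ ({0,1,2} : Finset (Fin 5)) ∧ ¬ t ⊆ ({0,2,4} : Finset (Fin 5))) ∨ (t ⊆ ({0,2,4} : Finset (Fin 5)) ∧ ¬ t ⊆ ({0,1,2} : Finset (Fin 5)))) → (t = ({0,1} : Finset (Fin 5)) ∨ t = ({0,4} : Finset (Fin 5)) ∨ t = ({1,2} : Finset (Fin 5)) ∨ t = ({2,4} : Finset (Fin 5))) by decide) s (hF s hs) hc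
    rcases hd with rfl|rfl|rfl|rfl <;> simp [hs]
  have c4 : (decide (({0,1} : Finset (Fin 5)) ∈ F) || decide (({0,2} : Finset (Fin 5)) ∈ F) || decide (({0,3} : Finset (Fin 5)) ∈ F) || decide (({0,4} : Finset (Fin 5)) ∈ F) || decide (({1,2} : Finset (Fin 5)) ∈ F) || decide (({3,4} : Finset (Fin 5)) ∈ F)) = true := by
    obtain ⟨s, hs, hc⟩ := h ({0,1,2} : Finset (Fin 5)) ({0,3,4} : Finset (Fin 5)) (by decide) (by decide) (by decide) (by decide)
    have hd := (show ∀ t : Finset (Fin 5), t.card = 2 → ((t ⊆ ({0,1,2} : Finset (Fin 5)) ∧ ¬ t ⊆ ({0,3,4} : Finset (Fin 5))) ∨ (t ⊆ ({0,3,4} : Finset (Fin 5)) ∧ ¬ t ⊆ ({0,1,2} : Finset (Fin 5)))) → (t = ({0,1} : Finset (Fin 5)) ∨ t = ({0,2} : Finset (Fin 5)) ∨ t = ({0,3} : Finset (Fin 5)) ∨ t = ({0,4} : Finset (Fin 5)) ∨ t = ({1,2} : Finset (Fin 5)) ∨ t = ({3,4} : Finset (Fin 5))) by decide) s (hF s hs)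 hc
    rcases hd with rfl|rfl|rfl|rfl|rfl|rfl <;> simp [hs]
  have c5 : (decide (({0,1} : Finset (Fin 5)) ∈ F) || decide (({0,2} : Finset (Fin 5)) ∈ F) || decide (({1,3} : Finset (Fin 5)) ∈ F) || decide (({2,3} : Finset (Fin 5)) ∈ F)) = true := by
    obtain ⟨s, hs, hc⟩ := h ({0,1,2} : Finset (Fin 5)) ({1,2,3} : Finset (Fin 5)) (by decide) (by decide) (by decide) (by decide)
    have hd := (show ∀ t : Finset (Fin 5), t.card = 2 → ((t ⊆ ({0,1,2} : Finset (Fin 5)) ∧ ¬ t ⊆ ({1,2,3} : Finset (Fin 5))) ∨ (t ⊆ ({1,2,3} : Finset (Fin 5)) ∧ ¬ t ⊆ ({0,1,2} : Finset (Fin 5)))) → (t = ({0,1} : Finset (Fin 5)) ∨ t = ({0,2} : Finset (Fin 5)) ∨ t = ({1,3} : Finset (Fin 5)) ∨ t = ({2,3} : Finset (Fin 5))) by decide) s (hF s hs) hc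
    rcases hd with rfl|rfl|rfl|rfl <;> simp [hs]
  have c6 : (decide (({0,1} : Finset (Fin 5)) ∈ F) || decide (({0,2} : Finset (Fin 5)) ∈ F) || decide (({1,4} : Finset (Fin 5)) ∈ F) || decide (({2,4} : Finset (Fin 5)) ∈ F)) = true := by
    obtain ⟨s, hs, hc⟩ := h ({0,1,2} : Finset (Fin 5)) ({1,2,4} : Finset (Fin 5)) (by decide) (by decide) (by decide) (by decide)
    have hd := (show ∀ t : Finset (Fin 5), t.card = 2 → ((t ⊆ ({0,1,2} : Finset (Fin 5)) ∧ ¬ t ⊆ ({1,2,4} : Finset (Fin 5))) ∨ (t ⊆ ({1,2,4} : Finset (Fin 5)) ∧ ¬ t ⊆ ({0,1,2} : Finset (Fin 5)))) → (t = ({0,1} : Finset (Fin 5)) ∨ t = ({0,2} : Finset (Fin 5)) ∨ t = ({1,4} : Finset (Fin 5)) ∨ t = ({2,4} : Finset (Fin 5))) by decide) s (hF s hs) hc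
    rcases hd with rfl|rfl|rfl|rfl <;> simp [hs]
  have c7 : (decide (({0,1} : Finset (Fin 5)) ∈ F) || decide (({0,2} : Finset (Fin 5)) ∈ F) || decide (({1,2} : Finset (Fin 5)) ∈ F) || decide (({1,3} : Finset (Fin 5)) ∈ F) || decide (({1,4} : Finset (Fin 5)) ∈ F) || decide (({3,4} : Finset (Fin 5)) ∈ F)) = true := by
    obtain ⟨s, hs, hc⟩ := h ({0,1,2} : Finset (Fin 5)) ({1,3,4} : Finset (Fin 5)) (by decide) (by decide) (by decide) (by decide)
    have hd := (show ∀ t : Finset (Fin 5), t.card = 2 → ((t ⊆ ({0,1,2} : Finset (Fin 5)) ∧ ¬ t ⊆ ({1,3,4} : Finset (Fin 5))) ∨ (t ⊆ ({1,3,4} : Finset (Fin 5)) ∧ ¬ t ⊆ ({0,1,2} : Finset (Fin 5)))) → (t = ({0,1} : Finset (Fin 5)) ∨ t = ({0,2} : Finset (Fin 5)) ∨ t = ({1,2} : Finset (Fin 5)) ∨ t = ({1,3} : Finset (Fin 5)) ∨ t = ({1,4} : Finset (Fin 5)) ∨ t = ({3,4} : Finset (Fin 5))) by decide) s (hF s hs)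 hc
    rcases hd with rfl|rfl|rfl|rfl|rfl|rfl <;> simp [hs]
  have c8 : (decide (({0,1} : Finset (Fin 5)) ∈ F) || decide (({0,2} : Finset (Fin 5)) ∈ F) || decide (({1,2} : Finset (Fin 5)) ∈ F) || decide (({2,3} : Finset (Fin 5)) ∈ F) || decide (({2,4} : Finset (Fin 5)) ∈ F) || decide (({3,4} : Finset (Fin 5)) ∈ F)) = true := by
    obtain ⟨s, hs, hc⟩ := h ({0,1,2} : Finset (Fin 5)) ({2,3,4} : Finset (Fin 5)) (by decide) (by decide) (by decide) (by decide)
    have hd := (show ∀ t : Finset (Fin 5), t.card = 2 → ((t ⊆ ({0,1,2} : Finset (Fin 5)) ∧ ¬ t ⊆ ({2,3,4} : Finset (Fin 5))) ∨ (t ⊆ ({2,3,4} : Finset (Fin 5)) ∧ ¬ t ⊆ ({0,1,2} : Finset (Fin 5)))) → (t = ({0,1} : Finset (Fin 5)) ∨ t = ({0,2} : Finset (Fin 5)) ∨ t = ({1,2} : Finset (Fin 5)) ∨ t = ({2,3} : Finset (Fin 5)) ∨ t = ({2,4} : Finset (Fin 5)) ∨ t = ({3,4} : Finset (Fin 5)))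 by decide) s (hF s hs) hc
    rcases hd with rfl|rfl|rfl|rfl|rfl|rfl <;> simp [hs]
  have c9 : (decide (({0,3} : Finset (Fin 5)) ∈ F) || decide (({0,4} : Finset (Fin 5)) ∈ F) || decide (({1,3} : Finset (Fin 5)) ∈ F) || decide (({1,4} : Finset (Fin 5)) ∈ F)) = true := by
    obtain ⟨s, hs, hc⟩ := h ({0,1,3} : Finset (Fin 5)) ({0,1,4} : Finset (Fin 5)) (by decide) (by decide) (by decide) (by decide)
    have hd := (show ∀ t : Finset (Fin 5), t.card = 2 → ((t ⊆ ({0,1,3} : Finset (Fin 5)) ∧ ¬ t ⊆ ({0,1,4} : Finset (Fin 5))) ∨ (t ⊆ ({0,1,4} : Finset (Fin 5)) ∧ ¬ t ⊆ ({0,1,3} : Finset (Fin 5)))) → (t = ({0,3} : Finset (Fin 5)) ∨ t = ({0,4} : Finset (Fin 5)) ∨ t = ({1,3} : Finset (Fin 5)) ∨ t = ({1,4} : Finset (Fin 5))) by decide) s (hF s hs) hc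
    rcases hd with rfl|rfl|rfl|rfl <;> simp [hs]
  have c10 : (decide (({0,1} : Finset (Fin 5)) ∈ F) || decide (({0,2} : Finset (Fin 5)) ∈ F) || decide (({1,3} : Finset (Fin 5)) ∈ F) || decide (({2,3} : Finset (Fin 5)) ∈ F)) = true := by
    obtain ⟨s, hs, hc⟩ := h ({0,1,3} : Finset (Fin 5)) ({0,2,3} : Finset (Fin 5)) (by decide) (by decide) (by decide) (by decide)
    have hd := (show ∀ t : Finset (Fin 5), t.card = 2 → ((t ⊆ ({0,1,3} : Finset (Fin 5)) ∧ ¬ t ⊆ ({0,2,3} : Finset (Fin 5))) ∨ (t ⊆ ({0,2,3} : Finset (Fin 5)) ∧ ¬ t ⊆ ({0,1,3} : Finset (Fin 5)))) → (t = ({0,1} : Finset (Fin 5)) ∨ t = ({0,2} : Finset (Fin 5)) ∨ t = ({1,3} : Finset (Fin 5)) ∨ t = ({2,3} : Finset (Fin 5))) by decide) s (hF s hs) hc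
    rcases hd with rfl|rfl|rfl|rfl <;> simp [hs]
  have c11 : (decide (({0,1} : Finset (Fin 5)) ∈ F) || decide (({0,2} : Finset (Fin 5)) ∈ F) || decide (({0,3} : Finset (Fin 5)) ∈ F) || decide (({0,4} : Finset (Fin 5)) ∈ F) || decide (({1,3} : Finset (Fin 5)) ∈ F) || decide (({2,4} : Finset (Fin 5)) ∈ F)) = true := by
    obtain ⟨s, hs, hc⟩ := h ({0,1,3} : Finset (Fin 5)) ({0,2,4} : Finset (Fin 5)) (by decide) (by decide) (by decide) (by decide)
    have hd := (show ∀ t : Finset (Fin 5), t.card = 2 → ((t ⊆ ({0,1,3} : Finset (Fin 5)) ∧ ¬ t ⊆ ({0,2,4} : Finset (Fin 5))) ∨ (t ⊆ ({0,2,4} : Finset (Fin 5)) ∧ ¬ t ⊆ ({0,1,3} : Finset (Fin 5)))) → (t = ({0,1} : Finset (Fin 5)) ∨ t = ({0,2} : Finset (Fin 5)) ∨ t = ({0,3} : Finset (Fin 5)) ∨ t = ({0,4} : Finset (Fin 5)) ∨ t = ({1,3} : Finset (Fin 5)) ∨ t = ({2,4} : Finset (Fin 5))) by decide) s (hF s hs)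 hc
    rcases hd with rfl|rfl|rfl|rfl|rfl|rfl <;> simp [hs]
  have c12 : (decide (({0,1} : Finset (Fin 5)) ∈ F) || decide (({0,4} : Finset (Fin 5)) ∈ F) || decide (({1,3} : Finset (Fin 5)) ∈ F) || decide (({3,4} : Finset (Fin 5)) ∈ F)) = true := by
    obtain ⟨s, hs, hc⟩ := h ({0,1,3} : Finset (Fin 5)) ({0,3,4} : Finset (Fin 5)) (by decide) (by decide) (by decide) (by decide)
    have hd := (show ∀ t : Finset (Fin 5), t.card = 2 → ((t ⊆ ({0,1,3} : Finset (Fin 5)) ∧ ¬ t ⊆ ({0,3,4} : Finset (Fin 5))) ∨ (t ⊆ ({0,3,4} : Finset (Fin 5)) ∧ ¬ t ⊆ ({0,1,3} : Finset (Fin 5)))) → (t = ({0,1} : Finset (Fin 5)) ∨ t = ({0,4} : Finset (Fin 5)) ∨ t = ({1,3} : Finset (Fin 5)) ∨ t = ({3,4} : Finset (Fin 5))) by decide) s (hF s hs) hc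
    rcases hd with rfl|rfl|rfl|rfl <;> simp [hs]
  have c13 : (decide (({0,1} : Finset (Fin 5)) ∈ F) || decide (({0,3} : Finset (Fin 5)) ∈ F) || decide (({1,2} : Finset (Fin 5)) ∈ F) || decide (({2,3} : Finset (Fin 5)) ∈ F)) = true := by
    obtain ⟨s, hs, hc⟩ := h ({0,1,3} : Finset (Fin 5)) ({1,2,3} : Finset (Fin 5)) (by decide) (by decide) (by decide) (by decide)
    have hd := (show ∀ t : Finset (Fin 5), t.card = 2 → ((t ⊆ ({0,1,3} : Finset (Fin 5)) ∧ ¬ t ⊆ ({1,2,3} : Finset (Fin 5))) ∨ (t ⊆ ({1,2,3} : Finset (Fin 5)) ∧ ¬ t ⊆ ({0,1,3} : Finset (Fin 5)))) → (t = ({0,1} : Finset (Fin 5)) ∨ t = ({0,3} : Finset (Fin 5)) ∨ t = ({1,2} : Finset (Fin 5)) ∨ t = ({2,3} : Finset (Fin 5))) by decide) s (hF s hs) hc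
    rcases hd with rfl|rfl|rfl|rfl <;> simp [hs]
  have c14 : (decide (({0,1} : Finset (Fin 5)) ∈ F) || decide (({0,3} : Finset (Fin 5)) ∈ F) || decide (({1,2} : Finset (Fin 5)) ∈ F) || decide (({1,3} : Finset (Fin 5)) ∈ F) || decide (({1,4} : Finset (Fin 5)) ∈ F) || decide (({2,4} : Finset (Fin 5)) ∈ F)) = true := by
    obtain ⟨s, hs, hc⟩ := h ({0,1,3} : Finset (Fin 5)) ({1,2,4} : Finset (Fin 5)) (by decide) (by decide) (by decide) (by decide)
    have hd := (show ∀ t : Finset (Fin 5), t.card = 2 → ((t ⊆ ({0,1,3} : Finset (Fin 5)) ∧ ¬ t ⊆ ({1,2,4} : Finset (Fin 5))) ∨ (t ⊆ ({1,2,4} : Finset (Fin 5)) ∧ ¬ t ⊆ ({0,1,3} : Finset (Fin 5)))) → (t = ({0,1} : Finset (Fin 5)) ∨ t = ({0,3} : Finset (Fin 5)) ∨ t = ({1,2} : Finset (Fin 5)) ∨ t = ({1,3} : Finset (Fin 5)) ∨ t = ({1,4} : Finset (Fin 5)) ∨ t = ({2,4} : Finset (Fin 5))) by decide) s (hF s hs)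 hc
    rcases hd with rfl|rfl|rfl|rfl|rfl|rfl <;> simp [hs]
  have c15 : (decide (({0,1} : Finset (Fin 5)) ∈ F) || decide (({0,3} : Finset (Fin 5)) ∈ F) || decide (({1,4} : Finset (Fin 5)) ∈ F) || decide (({3,4} : Finset (Fin 5)) ∈ F)) = true := by
    obtain ⟨s, hs, hc⟩ := h ({0,1,3} : Finset (Fin 5)) ({1,3,4} : Finset (Fin 5)) (by decide) (by decide) (by decide) (by decide)
    have hd := (show ∀ t : Finset (Fin 5), t.card = 2 → ((t ⊆ ({0,1,3} : Finset (Fin 5)) ∧ ¬ t ⊆ ({1,3,4} : Finset (Fin 5))) ∨ (t ⊆ ({1,3,4} : Finset (Fin 5)) ∧ ¬ t ⊆ ({0,1,3} : Finset (Fin 5)))) → (t = ({0,1} : Finset (Fin 5)) ∨ t = ({0,3} : Finset (Fin 5)) ∨ t = ({1,4} : Finset (Fin 5)) ∨ t = ({3,4} : Finset (Fin 5))) by decide) s (hF s hs) hc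
    rcases hd with rfl|rfl|rfl|rfl <;> simp [hs]
  have c16 : (decide (({0,1} : Finset (Fin 5)) ∈ F) || decide (({0,3} : Finset (Fin 5)) ∈ F) || decide (({1,3} : Finset (Fin 5)) ∈ F) || decide (({2,3} : Finset (Fin 5)) ∈ F) || decide (({2,4} : Finset (Fin 5)) ∈ F) || decide (({3,4} : Finset (Fin 5)) ∈ F)) = true := by
    obtain ⟨s, hs, hc⟩ := h ({0,1,3} : Finset (Fin 5)) ({2,3,4} : Finset (Fin 5)) (by decide) (by decide) (by decide) (by decide)
    have hd := (show ∀ t : Finset (Fin 5), t.card = 2 → ((t ⊆ ({0,1,3} : Finset (Fin 5)) ∧ ¬ t ⊆ ({2,3,4} : Finset (Fin 5))) ∨ (t ⊆ ({2,3,4} : Finset (Fin 5)) ∧ ¬ t ⊆ ({0,1,3} : Finset (Fin 5)))) → (t = ({0,1} : Finset (Fin 5)) ∨ t = ({0,3} : Finset (Fin 5)) ∨ t = ({1,3} : Finset (Fin 5)) ∨ t = ({2,3} : Finset (Fin 5)) ∨ t = ({2,4} : Finset (Fin 5)) ∨ t = ({3,4} : Finset (Fin 5))) by decide) s (hF s hs)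 hc
    rcases hd with rfl|rfl|rfl|rfl|rfl|rfl <;> simp [hs]
  have c17 : (decide (({0,1} : Finset (Fin 5)) ∈ F) || decide (({0,2} : Finset (Fin 5)) ∈ F) || decide (({0,3} : Finset (Fin 5)) ∈ F) || decide (({0,4} : Finset (Fin 5)) ∈ F) || decide (({1,4} : Finset (Fin 5)) ∈ F) || decide (({2,3} : Finset (Fin 5)) ∈ F)) = true := by
    obtain ⟨s, hs, hc⟩ := h ({0,1,4} : Finset (Fin 5)) ({0,2,3} : Finset (Fin 5)) (by decide) (by decide) (by decide) (by decide)
    have hd := (show ∀ t : Finset (Fin 5), t.card = 2 → ((t ⊆ ({0,1,4} : Finset (Fin 5)) ∧ ¬ t ⊆ ({0,2,3} : Finset (Fin 5))) ∨ (t ⊆ ({0,2,3} : Finset (Fin 5)) ∧ ¬ t ⊆ ({0,1,4} : Finset (Fin 5)))) → (t = ({0,1} : Finset (Fin 5)) ∨ t = ({0,2} : Finset (Fin 5)) ∨ t = ({0,3} : Finset (Fin 5)) ∨ t = ({0,4} : Finset (Fin 5)) ∨ t = ({1,4} : Finset (Fin 5)) ∨ t = ({2,3} : Finset (Fin 5)))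 by decide) s (hF s hs) hc
    rcases hd with rfl|rfl|rfl|rfl|rfl|rfl <;> simp [hs]
  have c18 : (decide (({0,1} : Finset (Fin 5)) ∈ F) || decide (({0,2} : Finset (Fin 5)) ∈ F) || decide (({1,4} : Finset (Fin 5)) ∈ F) || decide (({2,4} : Finset (Fin 5)) ∈ F)) = true := by
    obtain ⟨s, hs, hc⟩ := h ({0,1,4} : Finset (Fin 5)) ({0,2,4} : Finset (Fin 5)) (by decide) (by decide) (by decide) (by decide)
    have hd := (show ∀ t : Finset (Fin 5), t.card = 2 → ((t ⊆ ({0,1,4} : Finset (Fin 5)) ∧ ¬ t ⊆ ({0,2,4} : Finset (Fin 5))) ∨ (t ⊆ ({0,2,4} : Finset (Fin 5)) ∧ ¬ t ⊆ ({0,1,4} : Finset (Fin 5)))) → (t = ({0,1} : Finset (Fin 5)) ∨ t = ({0,2} : Finset (Fin 5)) ∨ t = ({1,4} : Finset (Fin 5)) ∨ t = ({2,4} : Finset (Fin 5))) by decide) s (hF s hs) hc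
    rcases hd with rfl|rfl|rfl|rfl <;> simp [hs]
  have c19 : (decide (({0,1} : Finset (Fin 5)) ∈ F) || decide (({0,3} : Finset (Fin 5)) ∈ F) || decide (({1,4} : Finset (Fin 5)) ∈ F) || decide (({3,4} : Finset (Fin 5)) ∈ F)) = true := by
    obtain ⟨s, hs, hc⟩ := h ({0,1,4} : Finset (Fin 5)) ({0,3,4} : Finset (Fin 5)) (by decide) (by decide) (by decide) (by decide)
    have hd := (show ∀ t : Finset (Fin 5), t.card = 2 → ((t ⊆ ({0,1,4} : Finset (Fin 5)) ∧ ¬ t ⊆ ({0,3,4} : Finset (Fin 5))) ∨ (t ⊆ ({0,3,4} : Finset (Fin 5)) ∧ ¬ t ⊆ ({0,1,4} : Finset (Fin 5)))) → (t = ({0,1} : Finset (Fin 5)) ∨ t = ({0,3} : Finset (Fin 5)) ∨ t = ({1,4} : Finset (Fin 5)) ∨ t = ({3,4} : Finset (Fin 5))) by decide) s (hF s hs) hc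
    rcases hd with rfl|rfl|rfl|rfl <;> simp [hs]
  have c20 : (decide (({0,1} : Finset (Fin 5)) ∈ F) || decide (({0,4} : Finset (Fin 5)) ∈ F) || decide (({1,2} : Finset (Fin 5)) ∈ F) || decide (({1,3} : Finset (Fin 5)) ∈ F) || decide (({1,4} : Finset (Fin 5)) ∈ F) || decide (({2,3} : Finset (Fin 5)) ∈ F)) = true := by
    obtain ⟨s, hs, hc⟩ := h ({0,1,4} : Finset (Fin 5)) ({1,2,3} : Finset (Fin 5)) (by decide) (by decide) (by decide) (by decide)
    have hd := (show ∀ t : Finset (Fin 5), t.card = 2 → ((t ⊆ ({0,1,4} : Finset (Fin 5)) ∧ ¬ t ⊆ ({1,2,3} : Finset (Fin 5))) ∨ (t ⊆ ({1,2,3} : Finset (Fin 5)) ∧ ¬ t ⊆ ({0,1,4} : Finset (Fin 5)))) → (t = ({0,1} : Finset (Fin 5)) ∨ t = ({0,4} : Finset (Fin 5)) ∨ t = ({1,2} : Finset (Fin 5)) ∨ t = ({1,3} : Finset (Fin 5)) ∨ t = ({1,4} : Finset (Fin 5)) ∨ t = ({2,3} : Finset (Fin 5))) by decide) s (hF s hs)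 hc
    rcases hd with rfl|rfl|rfl|rfl|rfl|rfl <;> simp [hs]
  have c21 : (decide (({0,1} : Finset (Fin 5)) ∈ F) || decide (({0,4} : Finset (Fin 5)) ∈ F) || decide (({1,2} : Finset (Fin 5)) ∈ F) || decide (({2,4} : Finset (Fin 5)) ∈ F)) = true := by
    obtain ⟨s, hs, hc⟩ := h ({0,1,4} : Finset (Fin 5)) ({1,2,4} : Finset (Fin 5)) (by decide) (by decide) (by decide) (by decide)
    have hd := (show ∀ t : Finset (Fin 5), t.card = 2 → ((t ⊆ ({0,1,4} : Finset (Fin 5)) ∧ ¬ t ⊆ ({1,2,4} : Finset (Fin 5))) ∨ (t ⊆ ({1,2,4} : Finset (Fin 5)) ∧ ¬ t ⊆ ({0,1,4} : Finset (Fin 5)))) → (t = ({0,1} : Finset (Fin 5)) ∨ t = ({0,4} : Finset (Fin 5)) ∨ t = ({1,2} : Finset (Fin 5)) ∨ t = ({2,4} : Finset (Fin 5))) by decide) s (hF s hs) hc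
    rcases hd with rfl|rfl|rfl|rfl <;> simp [hs]
  have c22 : (decide (({0,1} : Finset (Fin 5)) ∈ F) || decide (({0,4} : Finset (Fin 5)) ∈ F) || decide (({1,3} : Finset (Fin 5)) ∈ F) || decide (({3,4} : Finset (Fin 5)) ∈ F)) = true := by
    obtain ⟨s, hs, hc⟩ := h ({0,1,4} : Finset (Fin 5)) ({1,3,4} : Finset (Fin 5)) (by decide) (by decide) (by decide) (by decide)
    have hd := (show ∀ t : Finset (Fin 5), t.card = 2 → ((t ⊆ ({0,1,4} : Finset (Fin 5)) ∧ ¬ t ⊆ ({1,3,4} : Finset (Fin 5))) ∨ (t ⊆ ({1,3,4} : Finset (Fin 5)) ∧ ¬ t ⊆ ({0,1,4} : Finset (Fin 5)))) → (t = ({0,1} : Finset (Fin 5)) ∨ t = ({0,4} : Finset (Fin 5)) ∨ t = ({1,3} : Finset (Fin 5)) ∨ t = ({3,4} : Finset (Fin 5))) by decide) s (hF s hs) hc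
    rcases hd with rfl|rfl|rfl|rfl <;> simp [hs]
  have c23 : (decide (({0,1} : Finset (Fin 5)) ∈ F) || decide (({0,4} : Finset (Fin 5)) ∈ F) || decide (({1,4} : Finset (Fin 5)) ∈ F) || decide (({2,3} : Finset (Fin 5)) ∈ F) || decide (({2,4} : Finset (Fin 5)) ∈ F) || decide (({3,4} : Finset (Fin 5)) ∈ F)) = true := by
    obtain ⟨s, hs, hc⟩ := h ({0,1,4} : Finset (Fin 5)) ({2,3,4} : Finset (Fin 5)) (by decide) (by decide) (by decide) (by decide)
    have hd := (show ∀ t : Finset (Fin 5), t.card = 2 → ((t ⊆ ({0,1,4} : Finset (Fin 5)) ∧ ¬ t ⊆ ({2,3,4} : Finset (Fin 5))) ∨ (t ⊆ ({2,3,4} : Finset (Fin 5)) ∧ ¬ t ⊆ ({0,1,4} : Finset (Fin 5)))) → (t = ({0,1} : Finset (Fin 5)) ∨ t = ({0,4} : Finset (Fin 5)) ∨ t = ({1,4} : Finset (Fin 5)) ∨ t = ({2,3} : Finset (Fin 5)) ∨ t = ({2,4} : Finset (Fin 5)) ∨ t = ({3,4} : Finset (Fin 5))) by decide) s (hF s hs)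 hc
    rcases hd with rfl|rfl|rfl|rfl|rfl|rfl <;> simp [hs]
  have c24 : (decide (({0,3} : Finset (Fin 5)) ∈ F) || decide (({0,4} : Finset (Fin 5)) ∈ F) || decide (({2,3} : Finset (Fin 5)) ∈ F) || decide (({2,4} : Finset (Fin 5)) ∈ F)) = true := by
    obtain ⟨s, hs, hc⟩ := h ({0,2,3} : Finset (Fin 5)) ({0,2,4} : Finset (Fin 5)) (by decide) (by decide) (by decide) (by decide)
    have hd := (show ∀ t : Finset (Fin 5), t.card = 2 → ((t ⊆ ({0,2,3} : Finset (Fin 5)) ∧ ¬ t ⊆ ({0,2,4} : Finset (Fin 5))) ∨ (t ⊆ ({0,2,4} : Finset (Fin 5)) ∧ ¬ t ⊆ ({0,2,3} : Finset (Fin 5)))) → (t = ({0,3} : Finset (Fin 5)) ∨ t = ({0,4} : Finset (Fin 5)) ∨ t = ({2,3} : Finset (Fin 5)) ∨ t = ({2,4} : Finset (Fin 5))) by decide) s (hF s hs) hc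
    rcases hd with rfl|rfl|rfl|rfl <;> simp [hs]
  have c25 : (decide (({0,2} : Finset (Fin 5)) ∈ F) || decide (({0,4} : Finset (Fin 5)) ∈ F) || decide (({2,3} : Finset (Fin 5)) ∈ F) || decide (({3,4} : Finset (Fin 5)) ∈ F)) = true := by
    obtain ⟨s, hs, hc⟩ := h ({0,2,3} : Finset (Fin 5)) ({0,3,4} : Finset (Fin 5)) (by decide) (by decide) (by decide) (by decide)
    have hd := (show ∀ t : Finset (Fin 5), t.card = 2 → ((t ⊆ ({0,2,3} : Finset (Fin 5)) ∧ ¬ t ⊆ ({0,3,4} : Finset (Fin 5))) ∨ (t ⊆ ({0,3,4} : Finset (Fin 5)) ∧ ¬ t ⊆ ({0,2,3} : Finset (Fin 5)))) → (t = ({0,2} : Finset (Fin 5)) ∨ t = ({0,4} : Finset (Fin 5)) ∨ t = ({2,3} : Finset (Fin 5)) ∨ t = ({3,4} : Finset (Fin 5))) by decide) s (hF s hs) hc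
    rcases hd with rfl|rfl|rfl|rfl <;> simp [hs]
  have c26 : (decide (({0,2} : Finset (Fin 5)) ∈ F) || decide (({0,3} : Finset (Fin 5)) ∈ F) || decide (({1,2} : Finset (Fin 5)) ∈ F) || decide (({1,3} : Finset (Fin 5)) ∈ F)) = true := by
    obtain ⟨s, hs, hc⟩ := h ({0,2,3} : Finset (Fin 5)) ({1,2,3} : Finset (Fin 5)) (by decide) (by decide) (by decide) (by decide)
    have hd := (show ∀ t : Finset (Fin 5), t.card = 2 → ((t ⊆ ({0,2,3} : Finset (Fin 5)) ∧ ¬ t ⊆ ({1,2,3} : Finset (Fin 5))) ∨ (t ⊆ ({1,2,3} : Finset (Fin 5)) ∧ ¬ t ⊆ ({0,2,3} : Finset (Fin 5)))) → (t = ({0,2} : Finset (Fin 5)) ∨ t = ({0,3} : Finset (Fin 5)) ∨ t = ({1,2} : Finset (Fin 5)) ∨ t = ({1,3} : Finset (Fin 5))) by decide) s (hF s hs) hc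
    rcases hd with rfl|rfl|rfl|rfl <;> simp [hs]
  have c27 : (decide (({0,2} : Finset (Fin 5)) ∈ F) || decide (({0,3} : Finset (Fin 5)) ∈ F) || decide (({1,2} : Finset (Fin 5)) ∈ F) || decide (({1,4} : Finset (Fin 5)) ∈ F) || decide (({2,3} : Finset (Fin 5)) ∈ F) || decide (({2,4} : Finset (Fin 5)) ∈ F)) = true := by
    obtain ⟨s, hs, hc⟩ := h ({0,2,3} : Finset (Fin 5)) ({1,2,4} : Finset (Fin 5)) (by decide) (by decide) (by decide) (by decide)
    have hd := (show ∀ t : Finset (Fin 5), t.card = 2 → ((t ⊆ ({0,2,3} : Finset (Fin 5)) ∧ ¬ t ⊆ ({1,2,4} : Finset (Fin 5))) ∨ (t ⊆ ({1,2,4} : Finset (Fin 5)) ∧ ¬ t ⊆ ({0,2,3} : Finset (Fin 5)))) → (t = ({0,2} : Finset (Fin 5)) ∨ t = ({0,3} : Finset (Fin 5)) ∨ t = ({1,2} : Finset (Fin 5)) ∨ t = ({1,4} : Finset (Fin 5)) ∨ t = ({2,3} : Finset (Fin 5)) ∨ t = ({2,4} : Finset (Fin 5))) by decide) s (hF s hs)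 hc
    rcases hd with rfl|rfl|rfl|rfl|rfl|rfl <;> simp [hs]
  have c28 : (decide (({0,2} : Finset (Fin 5)) ∈ F) || decide (({0,3} : Finset (Fin 5)) ∈ F) || decide (({1,3} : Finset (Fin 5)) ∈ F) || decide (({1,4} : Finset (Fin 5)) ∈ F) || decide (({2,3} : Finset (Fin 5)) ∈ F) || decide (({3,4} : Finset (Fin 5)) ∈ F)) = true := by
    obtain ⟨s, hs, hc⟩ := h ({0,2,3} : Finset (Fin 5)) ({1,3,4} : Finset (Fin 5)) (by decide) (by decide) (by decide) (by decide)
    have hd := (show ∀ t : Finset (Fin 5), t.card = 2 → ((t ⊆ ({0,2,3} : Finset (Fin 5)) ∧ ¬ t ⊆ ({1,3,4} : Finset (Fin 5))) ∨ (t ⊆ ({1,3,4} : Finset (Fin 5)) ∧ ¬ t ⊆ ({0,2,3} : Finset (Fin 5)))) → (t = ({0,2} : Finset (Fin 5)) ∨ t = ({0,3} : Finset (Fin 5)) ∨ t = ({1,3} : Finset (Fin 5)) ∨ t = ({1,4} : Finset (Fin 5)) ∨ t = ({2,3} : Finset (Fin 5)) ∨ t = ({3,4} : Finset (Fin 5)))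 by decide) s (hF s hs) hc
    rcases hd with rfl|rfl|rfl|rfl|rfl|rfl <;> simp [hs]
  have c29 : (decide (({0,2} : Finset (Fin 5)) ∈ F) || decide (({0,3} : Finset (Fin 5)) ∈ F) || decide (({2,4} : Finset (Fin 5)) ∈ F) || decide (({3,4} : Finset (Fin 5)) ∈ F)) = true := by
    obtain ⟨s, hs, hc⟩ := h ({0,2,3} : Finset (Fin 5)) ({2,3,4} : Finset (Fin 5)) (by decide) (by decide) (by decide) (by decide)
    have hd := (show ∀ t : Finset (Fin 5), t.card = 2 → ((t ⊆ ({0,2,3} : Finset (Fin 5)) ∧ ¬ t ⊆ ({2,3,4} : Finset (Fin 5))) ∨ (t ⊆ ({2,3,4} : Finset (Fin 5)) ∧ ¬ t ⊆ ({0,2,3} : Finset (Fin 5)))) → (t = ({0,2} : Finset (Fin 5)) ∨ t = ({0,3} : Finset (Fin 5)) ∨ t = ({2,4} : Finset (Fin 5)) ∨ t = ({3,4} : Finset (Fin 5))) by decide) s (hF s hs) hc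
    rcases hd with rfl|rfl|rfl|rfl <;> simp [hs]
  have c30 : (decide (({0,2} : Finset (Fin 5)) ∈ F) || decide (({0,3} : Finset (Fin 5)) ∈ F) || decide (({2,4} : Finset (Fin 5)) ∈ F) || decide (({3,4} : Finset (Fin 5)) ∈ F)) = true := by
    obtain ⟨s, hs, hc⟩ := h ({0,2,4} : Finset (Fin 5)) ({0,3,4} : Finset (Fin 5)) (by decide) (by decide) (by decide) (by decide)
    have hd := (show ∀ t : Finset (Fin 5), t.card = 2 → ((t ⊆ ({0,2,4} : Finset (Fin 5)) ∧ ¬ t ⊆ ({0,3,4} : Finset (Fin 5))) ∨ (t ⊆ ({0,3,4} : Finset (Fin 5)) ∧ ¬ t ⊆ ({0,2,4} : Finset (Fin 5)))) → (t = ({0,2} : Finset (Fin 5)) ∨ t = ({0,3} : Finset (Fin 5)) ∨ t = ({2,4} : Finset (Fin 5)) ∨ t = ({3,4} : Finset (Fin 5))) by decide) s (hF s hs) hc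
    rcases hd with rfl|rfl|rfl|rfl <;> simp [hs]
  have c31 : (decide (({0,2} : Finset (Fin 5)) ∈ F) || decide (({0,4} : Finset (Fin 5)) ∈ F) || decide (({1,2} : Finset (Fin 5)) ∈ F) || decide (({1,3} : Finset (Fin 5)) ∈ F) || decide (({2,3} : Finset (Fin 5)) ∈ F) || decide (({2,4} : Finset (Fin 5)) ∈ F)) = true := by
    obtain ⟨s, hs, hc⟩ := h ({0,2,4} : Finset (Fin 5)) ({1,2,3} : Finset (Fin 5)) (by decide) (by decide) (by decide) (by decide)
    have hd := (show ∀ t : Finset (Fin 5), t.card = 2 → ((t ⊆ ({0,2,4} : Finset (Fin 5)) ∧ ¬ t ⊆ ({1,2,3} : Finset (Fin 5))) ∨ (t ⊆ ({1,2,3} : Finset (Fin 5)) ∧ ¬ t ⊆ ({0,2,4} : Finset (Fin 5)))) → (t = ({0,2} : Finset (Fin 5)) ∨ t = ({0,4} : Finset (Fin 5)) ∨ t = ({1,2} : Finset (Fin 5)) ∨ t = ({1,3} : Finset (Fin 5)) ∨ t = ({2,3} : Finset (Fin 5)) ∨ t = ({2,4} : Finset (Fin 5))) by decide) s (hF s hs)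 hc
    rcases hd with rfl|rfl|rfl|rfl|rfl|rfl <;> simp [hs]
  have c32 : (decide (({0,2} : Finset (Fin 5)) ∈ F) || decide (({0,4} : Finset (Fin 5)) ∈ F) || decide (({1,2} : Finset (Fin 5)) ∈ F) || decide (({1,4} : Finset (Fin 5)) ∈ F)) = true := by
    obtain ⟨s, hs, hc⟩ := h ({0,2,4} : Finset (Fin 5)) ({1,2,4} : Finset (Fin 5)) (by decide) (by decide) (by decide) (by decide)
    have hd := (show ∀ t : Finset (Fin 5), t.card = 2 → ((t ⊆ ({0,2,4} : Finset (Fin 5)) ∧ ¬ t ⊆ ({1,2,4} : Finset (Fin 5))) ∨ (t ⊆ ({1,2,4} : Finset (Fin 5)) ∧ ¬ t ⊆ ({0,2,4} : Finset (Fin 5)))) → (t = ({0,2} : Finset (Fin 5)) ∨ t = ({0,4} : Finset (Fin 5)) ∨ t = ({1,2} : Finset (Fin 5)) ∨ t = ({1,4} : Finset (Fin 5))) by decide) s (hF s hs) hc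
    rcases hd with rfl|rfl|rfl|rfl <;> simp [hs]
  have c33 : (decide (({0,2} : Finset (Fin 5)) ∈ F) || decide (({0,4} : Finset (Fin 5)) ∈ F) || decide (({1,3} : Finset (Fin 5)) ∈ F) || decide (({1,4} : Finset (Fin 5)) ∈ F) || decide (({2,4} : Finset (Fin 5)) ∈ F) || decide (({3,4} : Finset (Fin 5)) ∈ F)) = true := by
    obtain ⟨s, hs, hc⟩ := h ({0,2,4} : Finset (Fin 5)) ({1,3,4} : Finset (Fin 5)) (by decide) (by decide) (by decide) (by decide)
    have hd := (show ∀ t : Finset (Fin 5), t.card = 2 → ((t ⊆ ({0,2,4} : Finset (Fin 5)) ∧ ¬ t ⊆ ({1,3,4} : Finset (Fin 5))) ∨ (t ⊆ ({1,3,4} : Finset (Fin 5)) ∧ ¬ t ⊆ ({0,2,4} : Finset (Fin 5)))) → (t = ({0,2} : Finset (Fin 5)) ∨ t = ({0,4} : Finset (Fin 5)) ∨ t = ({1,3} : Finset (Fin 5)) ∨ t = ({1,4} : Finset (Fin 5)) ∨ t = ({2,4} : Finset (Fin 5)) ∨ t = ({3,4} : Finset (Fin 5))) by decide) s (hF s hs)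 hc
    rcases hd with rfl|rfl|rfl|rfl|rfl|rfl <;> simp [hs]
  have c34 : (decide (({0,2} : Finset (Fin 5)) ∈ F) || decide (({0,4} : Finset (Fin 5)) ∈ F) || decide (({2,3} : Finset (Fin 5)) ∈ F) || decide (({3,4} : Finset (Fin 5)) ∈ F)) = true := by
    obtain ⟨s, hs, hc⟩ := h ({0,2,4} : Finset (Fin 5)) ({2,3,4} : Finset (Fin 5)) (by decide) (by decide) (by decide) (by decide)
    have hd := (show ∀ t : Finset (Fin 5), t.card = 2 → ((t ⊆ ({0,2,4} : Finset (Fin 5)) ∧ ¬ t ⊆ ({2,3,4} : Finset (Fin 5))) ∨ (t ⊆ ({2,3,4} : Finset (Fin 5)) ∧ ¬ t ⊆ ({0,2,4} : Finset (Fin 5)))) → (t = ({0,2} : Finset (Fin 5)) ∨ t = ({0,4} : Finset (Fin 5)) ∨ t = ({2,3} : Finset (Fin 5)) ∨ t = ({3,4} : Finset (Fin 5))) by decide) s (hF s hs) hc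
    rcases hd with rfl|rfl|rfl|rfl <;> simp [hs]
  have c35 : (decide (({0,3} : Finset (Fin 5)) ∈ F) || decide (({0,4} : Finset (Fin 5)) ∈ F) || decide (({1,2} : Finset (Fin 5)) ∈ F) || decide (({1,3} : Finset (Fin 5)) ∈ F) || decide (({2,3} : Finset (Fin 5)) ∈ F) || decide (({3,4} : Finset (Fin 5)) ∈ F)) = true := by
    obtain ⟨s, hs, hc⟩ := h ({0,3,4} : Finset (Fin 5)) ({1,2,3} : Finset (Fin 5)) (by decide) (by decide) (by decide) (by decide)
    have hd := (show ∀ t : Finset (Fin 5), t.card = 2 → ((t ⊆ ({0,3,4} : Finset (Fin 5)) ∧ ¬ t ⊆ ({1,2,3} : Finset (Fin 5))) ∨ (t ⊆ ({1,2,3} : Finset (Fin 5)) ∧ ¬ t ⊆ ({0,3,4} : Finset (Fin 5)))) → (t = ({0,3} : Finset (Fin 5)) ∨ t = ({0,4} : Finset (Fin 5)) ∨ t = ({1,2} : Finset (Fin 5)) ∨ t = ({1,3} : Finset (Fin 5)) ∨ t = ({2,3} : Finset (Fin 5)) ∨ t = ({3,4} : Finset (Fin 5))) by decide) s (hF s hs)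 hc
    rcases hd with rfl|rfl|rfl|rfl|rfl|rfl <;> simp [hs]
  have c36 : (decide (({0,3} : Finset (Fin 5)) ∈ F) || decide (({0,4} : Finset (Fin 5)) ∈ F) || decide (({1,2} : Finset (Fin 5)) ∈ F) || decide (({1,4} : Finset (Fin 5)) ∈ F) || decide (({2,4} : Finset (Fin 5)) ∈ F) || decide (({3,4} : Finset (Fin 5)) ∈ F)) = true := by
    obtain ⟨s, hs, hc⟩ := h ({0,3,4} : Finset (Fin 5)) ({1,2,4} : Finset (Fin 5)) (by decide) (by decide) (by decide) (by decide)
    have hd := (show ∀ t : Finset (Fin 5), t.card = 2 → ((t ⊆ ({0,3,4} : Finset (Fin 5)) ∧ ¬ t ⊆ ({1,2,4} : Finset (Fin 5))) ∨ (t ⊆ ({1,2,4} : Finset (Fin 5)) ∧ ¬ t ⊆ ({0,3,4} : Finset (Fin 5)))) → (t = ({0,3} : Finset (Fin 5)) ∨ t = ({0,4} : Finset (Fin 5)) ∨ t = ({1,2} : Finset (Fin 5)) ∨ t = ({1,4} : Finset (Fin 5)) ∨ t = ({2,4} : Finset (Fin 5)) ∨ t = ({3,4} : Finset (Fin 5)))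 by decide) s (hF s hs) hc
    rcases hd with rfl|rfl|rfl|rfl|rfl|rfl <;> simp [hs]
  have c37 : (decide (({0,3} : Finset (Fin 5)) ∈ F) || decide (({0,4} : Finset (Fin 5)) ∈ F) || decide (({1,3} : Finset (Fin 5)) ∈ F) || decide (({1,4} : Finset (Fin 5)) ∈ F)) = true := by
    obtain ⟨s, hs, hc⟩ := h ({0,3,4} : Finset (Fin 5)) ({1,3,4} : Finset (Fin 5)) (by decide) (by decide) (by decide) (by decide)
    have hd := (show ∀ t : Finset (Fin 5), t.card = 2 → ((t ⊆ ({0,3,4} : Finset (Fin 5)) ∧ ¬ t ⊆ ({1,3,4} : Finset (Fin 5))) ∨ (t ⊆ ({1,3,4} : Finset (Fin 5)) ∧ ¬ t ⊆ ({0,3,4} : Finset (Fin 5)))) → (t = ({0,3} : Finset (Fin 5)) ∨ t = ({0,4} : Finset (Fin 5)) ∨ t = ({1,3} : Finset (Fin 5)) ∨ t = ({1,4} : Finset (Fin 5))) by decide) s (hF s hs) hc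
    rcases hd with rfl|rfl|rfl|rfl <;> simp [hs]
  have c38 : (decide (({0,3} : Finset (Fin 5)) ∈ F) || decide (({0,4} : Finset (Fin 5)) ∈ F) || decide (({2,3} : Finset (Fin 5)) ∈ F) || decide (({2,4} : Finset (Fin 5)) ∈ F)) = true := by
    obtain ⟨s, hs, hc⟩ := h ({0,3,4} : Finset (Fin 5)) ({2,3,4} : Finset (Fin 5)) (by decide) (by decide) (by decide) (by decide)
    have hd := (show ∀ t : Finset (Fin 5), t.card = 2 → ((t ⊆ ({0,3,4} : Finset (Fin 5)) ∧ ¬ t ⊆ ({2,3,4} : Finset (Fin 5))) ∨ (t ⊆ ({2,3,4} : Finset (Fin 5)) ∧ ¬ t ⊆ ({0,3,4} : Finset (Fin 5)))) → (t = ({0,3} : Finset (Fin 5)) ∨ t = ({0,4} : Finset (Fin 5)) ∨ t = ({2,3} : Finset (Fin 5)) ∨ t = ({2,4} : Finset (Fin 5))) by decide) s (hF s hs) hc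
    rcases hd with rfl|rfl|rfl|rfl <;> simp [hs]
  have c39 : (decide (({1,3} : Finset (Fin 5)) ∈ F) || decide (({1,4} : Finset (Fin 5)) ∈ F) || decide (({2,3} : Finset (Fin 5)) ∈ F) || decide (({2,4} : Finset (Fin 5)) ∈ F)) = true := by
    obtain ⟨s, hs, hc⟩ := h ({1,2,3} : Finset (Fin 5)) ({1,2,4} : Finset (Fin 5)) (by decide) (by decide) (by decide) (by decide)
    have hd := (show ∀ t : Finset (Fin 5), t.card = 2 → ((t ⊆ ({1,2,3} : Finset (Fin 5)) ∧ ¬ t ⊆ ({1,2,4} : Finset (Fin 5))) ∨ (t ⊆ ({1,2,4} : Finset (Fin 5)) ∧ ¬ t ⊆ ({1,2,3} : Finset (Fin 5)))) → (t = ({1,3} : Finset (Fin 5)) ∨ t = ({1,4} : Finset (Fin 5)) ∨ t = ({2,3} : Finset (Fin 5)) ∨ t = ({2,4} : Finset (Fin 5))) by decide) s (hF s hs) hc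
    rcases hd with rfl|rfl|rfl|rfl <;> simp [hs]
  have c40 : (decide (({1,2} : Finset (Fin 5)) ∈ F) || decide (({1,4} : Finset (Fin 5)) ∈ F) || decide (({2,3} : Finset (Fin 5)) ∈ F) || decide (({3,4} : Finset (Fin 5)) ∈ F)) = true := by
    obtain ⟨s, hs, hc⟩ := h ({1,2,3} : Finset (Fin 5)) ({1,3,4} : Finset (Fin 5)) (by decide) (by decide) (by decide) (by decide)
    have hd := (show ∀ t : Finset (Fin 5), t.card = 2 → ((t ⊆ ({1,2,3} : Finset (Fin 5)) ∧ ¬ t ⊆ ({1,3,4} : Finset (Fin 5))) ∨ (t ⊆ ({1,3,4} : Finset (Fin 5)) ∧ ¬ t ⊆ ({1,2,3} : Finset (Fin 5)))) → (t = ({1,2} : Finset (Fin 5)) ∨ t = ({1,4} : Finset (Fin 5)) ∨ t = ({2,3} : Finset (Fin 5)) ∨ t = ({3,4} : Finset (Fin 5))) by decide) s (hF s hs) hc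
    rcases hd with rfl|rfl|rfl|rfl <;> simp [hs]
  have c41 : (decide (({1,2} : Finset (Fin 5)) ∈ F) || decide (({1,3} : Finset (Fin 5)) ∈ F) || decide (({2,4} : Finset (Fin 5)) ∈ F) || decide (({3,4} : Finset (Fin 5)) ∈ F)) = true := by
    obtain ⟨s, hs, hc⟩ := h ({1,2,3} : Finset (Fin 5)) ({2,3,4} : Finset (Fin 5)) (by decide) (by decide) (by decide) (by decide)
    have hd := (show ∀ t : Finset (Fin 5), t.card = 2 → ((t ⊆ ({1,2,3} : Finset (Fin 5)) ∧ ¬ t ⊆ ({2,3,4} : Finset (Fin 5))) ∨ (t ⊆ ({2,3,4} : Finset (Fin 5)) ∧ ¬ t ⊆ ({1,2,3} : Finset (Fin 5)))) → (t = ({1,2} : Finset (Fin 5)) ∨ t = ({1,3} : Finset (Fin 5)) ∨ t = ({2,4} : Finset (Fin 5)) ∨ t = ({3,4} : Finset (Fin 5))) by decide) s (hF s hs) hc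
    rcases hd with rfl|rfl|rfl|rfl <;> simp [hs]
  have c42 : (decide (({1,2} : Finset (Fin 5)) ∈ F) || decide (({1,3} : Finset (Fin 5)) ∈ F) || decide (({2,4} : Finset (Fin 5)) ∈ F) || decide (({3,4} : Finset (Fin 5)) ∈ F)) = true := by
    obtain ⟨s, hs, hc⟩ := h ({1,2,4} : Finset (Fin 5)) ({1,3,4} : Finset (Fin 5)) (by decide) (by decide) (by decide) (by decide)
    have hd := (show ∀ t : Finset (Fin 5), t.card = 2 → ((t ⊆ ({1,2,4} : Finset (Fin 5)) ∧ ¬ t ⊆ ({1,3,4} : Finset (Fin 5))) ∨ (t ⊆ ({1,3,4} : Finset (Fin 5)) ∧ ¬ t ⊆ ({1,2,4} : Finset (Fin 5)))) → (t = ({1,2} : Finset (Fin 5)) ∨ t = ({1,3} : Finset (Fin 5)) ∨ t = ({2,4} : Finset (Fin 5)) ∨ t = ({3,4} : Finset (Fin 5))) by decide) s (hF s hs) hc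
    rcases hd with rfl|rfl|rfl|rfl <;> simp [hs]
  have c43 : (decide (({1,2} : Finset (Fin 5)) ∈ F) || decide (({1,4} : Finset (Fin 5)) ∈ F) || decide (({2,3} : Finset (Fin 5)) ∈ F) || decide (({3,4} : Finset (Fin 5)) ∈ F)) = true := by
    obtain ⟨s, hs, hc⟩ := h ({1,2,4} : Finset (Fin 5)) ({2,3,4} : Finset (Fin 5)) (by decide) (by decide) (by decide) (by decide)
    have hd := (show ∀ t : Finset (Fin 5), t.card = 2 → ((t ⊆ ({1,2,4} : Finset (Fin 5)) ∧ ¬ t ⊆ ({2,3,4} : Finset (Fin 5))) ∨ (t ⊆ ({2,3,4} : Finset (Fin 5)) ∧ ¬ t ⊆ ({1,2,4} : Finset (Fin 5)))) → (t = ({1,2} : Finset (Fin 5)) ∨ t = ({1,4} : Finset (Fin 5)) ∨ t = ({2,3} : Finset (Fin 5)) ∨ t = ({3,4} : Finset (Fin 5))) by decide) s (hF s hs) hc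
    rcases hd with rfl|rfl|rfl|rfl <;> simp [hs]
  have c44 : (decide (({1,3} : Finset (Fin 5)) ∈ F) || decide (({1,4} : Finset (Fin 5)) ∈ F) || decide (({2,3} : Finset (Fin 5)) ∈ F) || decide (({2,4} : Finset (Fin 5)) ∈ F)) = true := by
    obtain ⟨s, hs, hc⟩ := h ({1,3,4} : Finset (Fin 5)) ({2,3,4} : Finset (Fin 5)) (by decide) (by decide) (by decide) (by decide)
    have hd := (show ∀ t : Finset (Fin 5), t.card = 2 → ((t ⊆ ({1,3,4} : Finset (Fin 5)) ∧ ¬ t ⊆ ({2,3,4} : Finset (Fin 5))) ∨ (t ⊆ ({2,3,4} : Finset (Fin 5)) ∧ ¬ t ⊆ ({1,3,4} : Finset (Fin 5)))) → (t = ({1,3} : Finset (Fin 5)) ∨ t = ({1,4} : Finset (Fin 5)) ∨ t = ({2,3} : Finset (Fin 5)) ∨ t = ({2,4} : Finset (Fin 5))) by decide) s (hF s hs) hc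
    rcases hd with rfl|rfl|rfl|rfl <;> simp [hs]
  have key := boolL5 (decide (({0,1} : Finset (Fin 5)) ∈ F)) (decide (({0,2} : Finset (Fin 5)) ∈ F)) (decide (({0,3} : Finset (Fin 5)) ∈ F)) (decide (({0,4} : Finset (Fin 5)) ∈ F)) (decide (({1,2} : Finset (Fin 5)) ∈ F)) (decide (({1,3} : Finset (Fin 5)) ∈ F)) (decide (({1,4} : Finset (Fin 5)) ∈ F)) (decide (({2,3} : Finset (Fin 5)) ∈ F)) (decide (({2,4} : Finset (Fin 5)) ∈ F)) (decide (({3,4} : Finset (Fin 5)) ∈ F))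
    (by simp only [c0, c1, c2, c3, c4, c5, c6, c7, c8, c9, c10, c11, c12, c13, c14, c15, c16, c17, c18, c19, c20, c21, c22, c23, c24, c25, c26, c27, c28, c29, c30, c31, c32, c33, c34, c35, c36, c37, c38, c39, c40, c41, c42, c43, c44]; rfl)
  have hsub : F ⊆ ({{0,1}, {0,2}, {0,3}, {0,4}, {1,2}, {1,3}, {1,4}, {2,3}, {2,4}, {3,4}} : Finset (Finset (Fin 5))) := fun s hs =>
    (show ∀ t : Finset (Fin 5), t.card = 2 → t ∈ ({{0,1}, {0,2}, {0,3}, {0,4}, {1,2}, {1,3}, {1,4}, {2,3}, {2,4}, {3,4}} : Finset (Finset (Fin 5))) by decide) s (hF s hs)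
  have hFeq : F = ({{0,1}, {0,2}, {0,3}, {0,4}, {1,2}, {1,3}, {1,4}, {2,3}, {2,4}, {3,4}} : Finset (Finset (Fin 5))).filter (· ∈ F) := by
    ext t; simp only [Finset.mem_filter]
    exact ⟨fun ht => ⟨hsub ht, ht⟩, fun ht => ht.2⟩
  rw [hFeq, Finset.card_filter]
  rw [Finset.sum_insert (by decide), Finset.sum_insert (by decide), Finset.sum_insert (by decide), Finset.sum_insert (by decide), Finset.sum_insert (by decide), Finset.sum_insert (by decide), Finset.sum_insert (by decide), Finset.sum_insert (by decide), Finset.sum_insert (by decide), Finset.sum_singleton]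
  have step : ∀ t : Finset (Fin 5), (decide (t ∈ F)).toNat = if t ∈ F then 1 else 0 := fun t => by by_cases ht : t ∈ F <;> simp [ht]
  simp only [step] at key
  generalize (if ({0,1} : Finset (Fin 5)) ∈ F then 1 else 0) = n0 at key ⊢
  generalize (if ({0,2} : Finset (Fin 5)) ∈ F then 1 else 0) = n1 at key ⊢
  generalize (if ({0,3} : Finset (Fin 5)) ∈ F then 1 else 0) = n2 at key ⊢
  generalize (if ({0,4} : Finset (Fin 5)) ∈ F then 1 else 0) = n3 at key ⊢
  generalize (if ({1,2} : Finset (Fin 5)) ∈ F then 1 else 0) = n4 at key ⊢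
  generalize (if ({1,3} : Finset (Fin 5)) ∈ F then 1 else 0) = n5 at key ⊢
  generalize (if ({1,4} : Finset (Fin 5)) ∈ F then 1 else 0) = n6 at key ⊢
  generalize (if ({2,3} : Finset (Fin 5)) ∈ F then 1 else 0) = n7 at key ⊢
  generalize (if ({2,4} : Finset (Fin 5)) ∈ F then 1 else 0) = n8 at key ⊢
  generalize (if ({3,4} : Finset (Fin 5)) ∈ F then 1 else 0) = n9 at key ⊢
  omega
section AuxBasic

variable {β : Type*} [DecidableEq β]

lemma pair_cases {a b c d : Finset β} (h : ({a, b} : Finset (Finset β)) = {c, d}) (hcd : c ≠ d) :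
    (a = c ∧ b = d) ∨ (a = d ∧ b = c) := by
  have ha : a ∈ ({c, d} : Finset (Finset β)) := h ▸ mem_insert_self a {b}
  have hd' : d ∈ ({a, b} : Finset (Finset β)) := h ▸ mem_insert_of_mem (mem_singleton_self d)
  have hc' : c ∈ ({a, b} : Finset (Finset β)) := h ▸ mem_insert_self c {d}
  simp only [mem_insert, mem_singleton] at ha hd' hc'
  rcases ha with rfl | rfl
  · rcases hd' with rfl | rfl
    · exact absurd rfl hcd
    · exact Or.inl ⟨rfl, rfl⟩
  · rcases hc' with rfl | rfl
    · exact absurd rfl hcd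
    · exact Or.inr ⟨rfl, rfl⟩

lemma exists_second {u : Finset β} {a : β} (h : u.card = 2) (ha : a ∈ u) :
    ∃ w, w ≠ a ∧ u = {a, w} := by
  obtain ⟨p, q, hpq, rfl⟩ := Finset.card_eq_two.1 h
  simp only [mem_insert, mem_singleton] at ha
  rcases ha with rfl | rfl
  · exact ⟨q, fun hq => hpq hq.symm, rfl⟩
  · exact ⟨p, fun hp => hpq hp, Finset.pair_comm p a⟩

lemma pair_subset {u : Finset β} {p q : β} : ({p, q} : Finset β) ⊆ u ↔ p ∈ u ∧ q ∈ u := by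
  simp [Finset.insert_subset_iff]

lemma eq_pair_of_subset {u : Finset β} {p q : β} (hp : p ∈ u) (hq : q ∈ u) (hpq : p ≠ q)
    (hc : u.card = 2) : u = {p, q} :=
  (Finset.eq_of_subset_of_card_le (pair_subset.2 ⟨hp, hq⟩)
    (by rw [hc, Finset.card_insert_of_notMem (by simp [hpq]), Finset.card_singleton])).symm

end AuxBasic

section AuxSplit

variable {α : Type*} [DecidableEq α]

/-- From a split and two distinct members, get the standard structure. -/
lemma split_pair {X : Finset α} {S : Finset (Finset α)} (hS : IsSplit X S) {t t' : Finset α}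
    (ht : t ∈ S) (ht' : t' ∈ S) (hne : t ≠ t') :
    S = {t, t'} ∧ t ∪ t' = X ∧ t ∩ t' = ∅ := by
  obtain ⟨P, Q, rfl, hunion, hinter, -, -⟩ := hS
  simp only [mem_insert, mem_singleton] at ht ht'
  rcases ht with h1 | h1 <;> rcases ht' with h2 | h2
  · exact absurd (h1.trans h2.symm) hne
  · rw [h1, h2]; exact ⟨rfl, hunion, hinter⟩
  · rw [h1, h2]
    exact ⟨Finset.pair_comm P Q, by rw [Finset.union_comm]; exact hunion,
      by rw [Finset.inter_comm]; exact hinter⟩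
  · exact absurd (h1.trans h2.symm) hne

end AuxSplit
section AuxRestrict

variable {α : Type*} [DecidableEq α]

/-- Main restriction lemma: a split of `X` both of whose parts meet `Y ⊆ X` (with
`|Y| ≤ 5`) in at least two elements restricts to a 2-split of `Y`. -/
lemma restrict_two_split {X Y : Finset α} {𝒮 : Finset (Finset (Finset α))}
    (h𝒮 : IsSplitSystem X 𝒮) {S : Finset (Finset α)} (hS : S ∈ 𝒮) {t t' : Finset α}
    (ht : t ∈ S) (ht' : t' ∈ S) (hne : t ≠ t') (hY : Y ⊆ X) (hY5 : Y.card ≤ 5)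
    (h2 : 2 ≤ (t ∩ Y).card) (h2' : 2 ≤ (t' ∩ Y).card) :
    ({t ∩ Y, t' ∩ Y} : Finset (Finset α)) ∈ restrictSS 𝒮 Y ∧
    (t ∩ Y) ∪ (t' ∩ Y) = Y ∧ (t ∩ Y) ∩ (t' ∩ Y) = ∅ ∧
    (t ∩ Y).card + (t' ∩ Y).card = Y.card ∧
    IsRSplit Y 2 ({t ∩ Y, t' ∩ Y} : Finset (Finset α)) := by
  obtain ⟨hSpair, hunion, hinter⟩ := split_pair (h𝒮.1 S hS) ht ht' hne
  have hun : (t ∩ Y) ∪ (t' ∩ Y) = Y := by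
    rw [← Finset.union_inter_distrib_right, hunion, Finset.inter_eq_right.2 hY]
  have hin : (t ∩ Y) ∩ (t' ∩ Y) = ∅ := by
    apply Finset.eq_empty_of_forall_notMem
    intro z hz
    simp only [Finset.mem_inter] at hz
    have : z ∈ t ∩ t' := Finset.mem_inter.2 ⟨hz.1.1, hz.2.1⟩
    rw [hinter] at this
    exact absurd this (Finset.notMem_empty z)
  have hdisj : Disjoint (t ∩ Y) (t' ∩ Y) := Finset.disjoint_iff_inter_eq_empty.2 hin
  have hcard : (t ∩ Y).card + (t' ∩ Y).card = Y.card := by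
    rw [← Finset.card_union_of_disjoint hdisj, hun]
  have hrestrict : restrictSplit S Y = {t ∩ Y, t' ∩ Y} := by
    rw [hSpair]
    simp [restrictSplit, Finset.image_insert]
  have hne1 : t ∩ Y ≠ ∅ := by
    intro h; rw [h] at h2; simp at h2
  have hne2 : t' ∩ Y ≠ ∅ := by
    intro h; rw [h] at h2'; simp at h2'
  have hmem : ({t ∩ Y, t' ∩ Y} : Finset (Finset α)) ∈ restrictSS 𝒮 Y := by
    rw [← hrestrict]
    simp only [restrictSS, Finset.mem_filter, Finset.mem_image]
    constructor
    · exact ⟨S, hS, rfl⟩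
    · intro u hu
      rw [hrestrict] at hu
      simp only [mem_insert, mem_singleton] at hu
      rcases hu with rfl | rfl
      · exact hne1
      · exact hne2
  refine ⟨hmem, hun, hin, hcard, ⟨⟨t ∩ Y, t' ∩ Y, rfl, hun, hin, hne1, hne2⟩, ?_, ?_⟩⟩
  · rcases (show (t ∩ Y).card = 2 ∨ (t' ∩ Y).card = 2 by omega) with h | h
    · exact ⟨t ∩ Y, mem_insert_self _ _, h⟩
    · exact ⟨t' ∩ Y, mem_insert_of_mem (mem_singleton_self _), h⟩
  · intro u hu
    simp only [mem_insert, mem_singleton] at hu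
    rcases hu with rfl | rfl
    · exact h2
    · exact h2'

/-- Extract the key structure from an injectivity witness, for `A, B ⊆ Y`. -/
lemma key_split {X Y : Finset α} {𝒮 : Finset (Finset (Finset α))}
    (h𝒮 : IsSplitSystem X 𝒮) (hY : Y ⊆ X) (hY5 : Y.card ≤ 5) {A B : Finset α}
    (hA : A ⊆ Y) (hB : B ⊆ Y) {S : Finset (Finset α)} (hS : S ∈ 𝒮)
    (hphi : phiNe A B S) :
    ∃ u v : Finset α, u ∪ v = Y ∧ u ∩ v = ∅ ∧ u.card + v.card = Y.card ∧
      2 ≤ (A ∩ u).card ∧ 2 ≤ (B ∩ v).card ∧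
      ({u, v} : Finset (Finset α)) ∈ restrictSS 𝒮 Y ∧
      IsRSplit Y 2 ({u, v} : Finset (Finset α)) := by
  obtain ⟨t, ht, t', ht', hne, h2A, h2B⟩ := hphi
  have hAu : A ∩ t ⊆ t ∩ Y := fun z hz => by
    simp only [Finset.mem_inter] at hz ⊢
    exact ⟨hz.2, hA hz.1⟩
  have hBv : B ∩ t' ⊆ t' ∩ Y := fun z hz => by
    simp only [Finset.mem_inter] at hz ⊢
    exact ⟨hz.2, hB hz.1⟩
  have h2 : 2 ≤ (t ∩ Y).card := le_trans h2A (Finset.card_le_card hAu)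
  have h2' : 2 ≤ (t' ∩ Y).card := le_trans h2B (Finset.card_le_card hBv)
  obtain ⟨hmem, hun, hin, hcard, hrs⟩ :=
    restrict_two_split h𝒮 hS ht ht' hne hY hY5 h2 h2'
  refine ⟨t ∩ Y, t' ∩ Y, hun, hin, hcard, ?_, ?_, hmem, hrs⟩
  · have : A ∩ t ⊆ A ∩ (t ∩ Y) := fun z hz => by
      simp only [Finset.mem_inter] at hz ⊢
      exact ⟨hz.1, hz.2, hA hz.1⟩
    exact le_trans h2A (Finset.card_le_card this)
  · have : B ∩ t' ⊆ B ∩ (t' ∩ Y) := fun z hz => by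
      simp only [Finset.mem_inter] at hz ⊢
      exact ⟨hz.1, hz.2, hB hz.1⟩
    exact le_trans h2B (Finset.card_le_card this)

end AuxRestrict
section AuxFour

variable {α : Type*} [DecidableEq α]

lemma H4 {X Y : Finset α} {𝒮 : Finset (Finset (Finset α))} (h𝒮 : IsSplitSystem X 𝒮)
    (hinj : ∀ A B : Finset α, A ⊆ X → B ⊆ X → A.card = 3 → B.card = 3 → A ≠ B →
      (A ∩ B).Nonempty → ∃ S ∈ 𝒮, phiNe A B S)
    (hY : Y ⊆ X) {a b x y : α}
    (hab : a ≠ b) (hax : a ≠ x) (hay : a ≠ y) (hbx : b ≠ x) (hby : b ≠ y) (hxy : x ≠ y)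
    (hYeq : Y = {a, b, x, y}) :
    ∃ T ∈ restrictSS 𝒮 Y, IsRSplit Y 2 T ∧ ∃ z w : α,
      ((z = x ∧ w = y) ∨ (z = y ∧ w = x)) ∧ T = {({a, z} : Finset α), {b, w}} := by
  have haY : a ∈ Y := by rw [hYeq]; simp
  have hbY : b ∈ Y := by rw [hYeq]; simp
  have hxY : x ∈ Y := by rw [hYeq]; simp
  have hyY : y ∈ Y := by rw [hYeq]; simp
  have hY4 : Y.card = 4 := by
    rw [hYeq, Finset.card_insert_of_notMem (by simp [hab, hax, hay]),
      Finset.card_insert_of_notMem (by simp [hbx, hby]),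
      Finset.card_insert_of_notMem (by simp [hxy]), Finset.card_singleton]
  have hA3 : ({a, x, y} : Finset α).card = 3 := by
    rw [Finset.card_insert_of_notMem (by simp [hax, hay]),
      Finset.card_insert_of_notMem (by simp [hxy]), Finset.card_singleton]
  have hB3 : ({b, x, y} : Finset α).card = 3 := by
    rw [Finset.card_insert_of_notMem (by simp [hbx, hby]),
      Finset.card_insert_of_notMem (by simp [hxy]), Finset.card_singleton]
  have hAY : ({a, x, y} : Finset α) ⊆ Y := by
    rw [hYeq]; intro z hz; simp only [mem_insert, mem_singleton] at hz ⊢; tauto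
  have hBY : ({b, x, y} : Finset α) ⊆ Y := by
    rw [hYeq]; intro z hz; simp only [mem_insert, mem_singleton] at hz ⊢; tauto
  have hAB : ({a, x, y} : Finset α) ≠ {b, x, y} := by
    intro h
    have : a ∈ ({b, x, y} : Finset α) := h ▸ mem_insert_self a {x, y}
    simp only [mem_insert, mem_singleton] at this
    tauto
  obtain ⟨S, hS, hphi⟩ := hinj {a, x, y} {b, x, y} (hAY.trans hY) (hBY.trans hY) hA3 hB3 hAB
    ⟨x, by simp⟩
  obtain ⟨u, v, hun, hin, hsum, h2A, h2B, hmem, hrs⟩ :=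
    key_split h𝒮 hY (by omega) hAY hBY hS hphi
  have hu2le : 2 ≤ u.card := le_trans h2A (Finset.card_le_card Finset.inter_subset_right)
  have hv2le : 2 ≤ v.card := le_trans h2B (Finset.card_le_card Finset.inter_subset_right)
  have hu2 : u.card = 2 := by omega
  have hv2 : v.card = 2 := by omega
  have hdis : ∀ z, z ∈ u → z ∈ v → False := by
    intro z h1 h2
    have : z ∈ u ∩ v := Finset.mem_inter.2 ⟨h1, h2⟩
    rw [hin] at this
    exact absurd this (Finset.notMem_empty z)
  have huY : u ⊆ Y := hun ▸ Finset.subset_union_left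
  have hvY : v ⊆ Y := hun ▸ Finset.subset_union_right
  -- a ∈ u
  have hau : a ∈ u := by
    by_contra hau
    have hav : a ∈ v := by
      have := hun ▸ haY
      simp only [Finset.mem_union] at this
      tauto
    have hsubxy : ({a, x, y} : Finset α) ∩ u ⊆ {x, y} := by
      intro z hz
      simp only [Finset.mem_inter, mem_insert, mem_singleton] at hz ⊢
      rcases hz.1 with rfl | h
      · exact absurd hz.2 hau
      · exact h
    have heq : ({a, x, y} : Finset α) ∩ u = {x, y} := by
      apply Finset.eq_of_subset_of_card_le hsubxy
      rw [Finset.card_insert_of_notMem (by simp [hxy]), Finset.card_singleton]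
      exact h2A
    have hxu : x ∈ u := (Finset.mem_inter.1 (heq ▸ (by simp : x ∈ ({x, y} : Finset α)))).2
    have hyu : y ∈ u := (Finset.mem_inter.1 (heq ▸ (by simp : y ∈ ({x, y} : Finset α)))).2
    have hueq : u = {x, y} := eq_pair_of_subset hxu hyu hxy hu2
    have hbv : b ∈ v := by
      have := hun ▸ hbY
      simp only [Finset.mem_union] at this
      rcases this with h | h
      · rw [hueq] at h; simp only [mem_insert, mem_singleton] at h; tauto
      · exact h
    have : ({b, x, y} : Finset α) ∩ v ⊆ {b} := by
      intro z hz
      simp only [Finset.mem_inter, mem_insert, mem_singleton] at hz ⊢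
      rcases hz.1 with rfl | rfl | rfl
      · rfl
      · exact absurd hz.2 (fun h => hdis z (hueq ▸ (by simp : z ∈ ({z, y} : Finset α))) h)
      · exact absurd hz.2 (fun h => hdis z (hueq ▸ (by simp : z ∈ ({x, z} : Finset α))) h)
    have hle := Finset.card_le_card this
    rw [Finset.card_singleton] at hle
    omega
  -- second element z of u
  obtain ⟨z, hzmem, hza⟩ := Finset.exists_mem_ne (by omega : 1 < (({a, x, y} : Finset α) ∩ u).card) a
  have hzu : z ∈ u := (Finset.mem_inter.1 hzmem).2
  have hzxy : z = x ∨ z = y := by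
    have := (Finset.mem_inter.1 hzmem).1
    simp only [mem_insert, mem_singleton] at this
    tauto
  have hueq : u = {a, z} := eq_pair_of_subset hau hzu (fun h => hza h.symm) hu2
  obtain ⟨w, hwz, hwa, hbw, hwY, hcase⟩ :
      ∃ w, w ≠ z ∧ w ≠ a ∧ b ≠ w ∧ w ∈ Y ∧ ((z = x ∧ w = y) ∨ (z = y ∧ w = x)) := by
    rcases hzxy with rfl | rfl
    · exact ⟨y, fun h => hxy h.symm, fun h => hay h.symm, hby, hyY, Or.inl ⟨rfl, rfl⟩⟩
    · exact ⟨x, hxy, fun h => hax h.symm, hbx, hxY, Or.inr ⟨rfl, rfl⟩⟩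
  have hbv : b ∈ v := by
    have := hun ▸ hbY
    simp only [Finset.mem_union] at this
    rcases this with h | h
    · rw [hueq] at h; simp only [mem_insert, mem_singleton] at h
      rcases h with rfl | rfl
      · exact absurd rfl hab
      · rcases hzxy with rfl | rfl
        · exact absurd rfl hbx
        · exact absurd rfl hby
    · exact h
  have hwv : w ∈ v := by
    have := hun ▸ hwY
    simp only [Finset.mem_union] at this
    rcases this with h | h
    · rw [hueq] at h; simp only [mem_insert, mem_singleton] at h; tauto
    · exact h
  have hveq : v = {b, w} := eq_pair_of_subset hbv hwv hbw hv2
  exact ⟨{u, v}, hmem, hrs, z, w, hcase, by rw [hueq, hveq]⟩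

end AuxFour
section AuxFour2

variable {α : Type*} [DecidableEq α]

/-- Refute equality of two pair-sets of pairs from element distinctness. -/
lemma pair_pair_ne {a z b w : α} (haz : a ≠ z) (hab : a ≠ b) (haw : a ≠ w)
    (hzb : z ≠ b) (hzw : z ≠ w) (hbw : b ≠ w) :
    ({({a, z} : Finset α), {b, w}} : Finset (Finset α)) ≠ {{a, b}, {z, w}} := by
  intro h
  have hm : ({a, z} : Finset α) ∈ ({({a, b} : Finset α), {z, w}} : Finset (Finset α)) :=
    h ▸ mem_insert_self _ _
  simp only [mem_insert, mem_singleton] at hm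
  rcases hm with hm | hm
  · have : b ∈ ({a, z} : Finset α) := hm ▸ (by simp : b ∈ ({a, b} : Finset α))
    simp only [mem_insert, mem_singleton] at this
    rcases this with rfl | rfl
    · exact hab rfl
    · exact hzb rfl
  · have : a ∈ ({z, w} : Finset α) := hm ▸ (by simp : a ∈ ({a, z} : Finset α))
    simp only [mem_insert, mem_singleton] at this
    rcases this with rfl | rfl
    · exact haz rfl
    · exact haw rfl

lemma fourdices_rev {X : Finset α} {𝒮 : Finset (Finset (Finset α))}
    (h𝒮 : IsSplitSystem X 𝒮)
    (hinj : ∀ A B : Finset α, A ⊆ X → B ⊆ X → A.card = 3 → B.card = 3 → A ≠ B →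
      (A ∩ B).Nonempty → ∃ S ∈ 𝒮, phiNe A B S) :
    FourDices X 𝒮 := by
  classical
  right
  intro Y hY hY4
  obtain ⟨a, s, has, hins, hs3⟩ := Finset.card_eq_succ.1 (show Y.card = 3 + 1 by omega)
  obtain ⟨b, x, y, hbx, hby, hxy, rfl⟩ := Finset.card_eq_three.1 hs3
  have hab : a ≠ b := fun h => has (h ▸ (by simp : b ∈ ({b, x, y} : Finset α)))
  have hax : a ≠ x := fun h => has (h ▸ (by simp : x ∈ ({b, x, y} : Finset α)))
  have hay : a ≠ y := fun h => has (h ▸ (by simp : y ∈ ({b, x, y} : Finset α)))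
  have hYeq : Y = {a, b, x, y} := by rw [← hins]
  obtain ⟨T1, hT1mem, hT1rs, z, w, hcase1, hT1eq⟩ :=
    H4 h𝒮 hinj hY hab hax hay hbx hby hxy hYeq
  obtain ⟨haz, haw, hbz, hbw, hzw⟩ :
      a ≠ z ∧ a ≠ w ∧ b ≠ z ∧ b ≠ w ∧ z ≠ w := by
    rcases hcase1 with ⟨rfl, rfl⟩ | ⟨rfl, rfl⟩
    · exact ⟨hax, hay, hbx, hby, hxy⟩
    · exact ⟨hay, hax, hby, hbx, fun h => hxy h.symm⟩
  have hYeq2 : Y = {a, z, b, w} := by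
    rcases hcase1 with ⟨rfl, rfl⟩ | ⟨rfl, rfl⟩
    · rw [hYeq]; ext c; simp only [mem_insert, mem_singleton]; tauto
    · rw [hYeq]; ext c; simp only [mem_insert, mem_singleton]; tauto
  obtain ⟨T2, hT2mem, hT2rs, z2, w2, hcase2, hT2eq⟩ :=
    H4 h𝒮 hinj hY haz hab haw (fun h => hbz h.symm) hzw hbw hYeq2
  have hT1T2 : T1 ≠ T2 := by
    rcases hcase2 with ⟨h1, h2⟩ | ⟨h1, h2⟩
    · rw [hT1eq, hT2eq, h1, h2]
      exact pair_pair_ne haz hab haw hbz.symm hzw hbw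
    · rw [hT1eq, hT2eq, h1, h2, Finset.pair_comm b w]
      exact pair_pair_ne haz haw hab hzw hbz.symm hbw.symm
  refine ⟨(restrictSS 𝒮 Y).filter (IsRSplit Y 2), Finset.filter_subset _ _, ?_,
    fun T hT => (Finset.mem_filter.1 hT).2⟩
  exact Finset.one_lt_card.2
    ⟨T1, Finset.mem_filter.2 ⟨hT1mem, hT1rs⟩, T2, Finset.mem_filter.2 ⟨hT2mem, hT2rs⟩, hT1T2⟩

end AuxFour2
section AuxVec

variable {α : Type*} [DecidableEq α]

lemma vec_inj {y0 y1 y2 y3 y4 : α} (h01 : y0 ≠ y1) (h02 : y0 ≠ y2) (h03 : y0 ≠ y3)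
    (h04 : y0 ≠ y4) (h12 : y1 ≠ y2) (h13 : y1 ≠ y3) (h14 : y1 ≠ y4) (h23 : y2 ≠ y3)
    (h24 : y2 ≠ y4) (h34 : y3 ≠ y4) : Function.Injective (![y0, y1, y2, y3, y4]) := by
  intro i j hij
  fin_cases i <;> fin_cases j <;> simp_all

lemma vec_image {y0 y1 y2 y3 y4 : α} :
    Finset.univ.image ![y0, y1, y2, y3, y4] = {y0, y1, y2, y3, y4} := by
  ext c
  simp only [Finset.mem_image, Finset.mem_univ, true_and, mem_insert, mem_singleton]
  constructor
  · rintro ⟨i, rfl⟩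
    fin_cases i <;> simp
  · rintro (rfl | rfl | rfl | rfl | rfl)
    exacts [⟨0, rfl⟩, ⟨1, rfl⟩, ⟨2, rfl⟩, ⟨3, rfl⟩, ⟨4, rfl⟩]

end AuxVec
section AuxFive

variable {α : Type*} [DecidableEq α]

lemma fivedices_rev {X : Finset α} {𝒮 : Finset (Finset (Finset α))}
    (h𝒮 : IsSplitSystem X 𝒮)
    (hinj : ∀ A B : Finset α, A ⊆ X → B ⊆ X → A.card = 3 → B.card = 3 → A ≠ B →
      (A ∩ B).Nonempty → ∃ S ∈ 𝒮, phiNe A B S) :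
    FiveDices X 𝒮 := by
  classical
  right
  intro Y hY hY5
  obtain ⟨y0, s0, h0, hins0, hs0⟩ := Finset.card_eq_succ.1 (show Y.card = 4 + 1 by omega)
  obtain ⟨y1, s1, h1, hins1, hs1⟩ := Finset.card_eq_succ.1 (show s0.card = 3 + 1 by omega)
  obtain ⟨y2, y3, y4, h23, h24, h34, rfl⟩ := Finset.card_eq_three.1 hs1
  have hYeq : Y = {y0, y1, y2, y3, y4} := by rw [← hins0, ← hins1]
  have h0s : y0 ∉ insert y1 ({y2, y3, y4} : Finset α) := hins1 ▸ h0
  simp only [mem_insert, mem_singleton, not_or] at h0s h1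
  obtain ⟨h01, h02, h03, h04⟩ := h0s
  obtain ⟨h12, h13, h14⟩ := h1
  set g : Fin 5 → α := ![y0, y1, y2, y3, y4] with hg
  have hginj : Function.Injective g := vec_inj h01 h02 h03 h04 h12 h13 h14 h23 h24 h34
  have hgY : Finset.univ.image g = Y := by rw [hg, vec_image, hYeq]
  set 𝒯 : Finset (Finset (Finset α)) := (restrictSS 𝒮 Y).filter (IsRSplit Y 2) with h𝒯
  set F : Finset (Finset (Fin 5)) := (Finset.univ.powersetCard 2).filter
    (fun s : Finset (Fin 5) => ({s.image g, Y \ s.image g} : Finset (Finset α)) ∈ 𝒯) with hF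
  have hF2 : ∀ s ∈ F, s.card = 2 := fun s hs =>
    (Finset.mem_powersetCard.1 (Finset.mem_filter.1 hs).1).2
  -- the combinatorial hypothesis for L5
  have hFhyp : ∀ A' B' : Finset (Fin 5), A'.card = 3 → B'.card = 3 → A' ≠ B' →
      (A' ∩ B').Nonempty → ∃ s ∈ F, (s ⊆ A' ∧ ¬ s ⊆ B') ∨ (s ⊆ B' ∧ ¬ s ⊆ A') := by
    intro A' B' hA'3 hB'3 hA'B' hN'
    set A : Finset α := A'.image g with hA
    set B : Finset α := B'.image g with hB
    have hA3 : A.card = 3 := by rw [hA, Finset.card_image_of_injective _ hginj, hA'3]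
    have hB3 : B.card = 3 := by rw [hB, Finset.card_image_of_injective _ hginj, hB'3]
    have hAY : A ⊆ Y := hgY ▸ Finset.image_subset_image (Finset.subset_univ _)
    have hBY : B ⊆ Y := hgY ▸ Finset.image_subset_image (Finset.subset_univ _)
    have hAB : A ≠ B := fun h => hA'B' (Finset.image_injective hginj h)
    have hNab : (A ∩ B).Nonempty := by
      obtain ⟨i, hi⟩ := hN'
      simp only [Finset.mem_inter] at hi
      exact ⟨g i, Finset.mem_inter.2 ⟨Finset.mem_image_of_mem g hi.1,
        Finset.mem_image_of_mem g hi.2⟩⟩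
    obtain ⟨S, hS, hphi⟩ := hinj A B (hAY.trans hY) (hBY.trans hY) hA3 hB3 hAB hNab
    obtain ⟨u, v, hun, hin, hsum, h2A, h2B, hmem, hrs⟩ :=
      key_split h𝒮 hY (by omega) hAY hBY hS hphi
    have hu2le : 2 ≤ u.card := le_trans h2A (Finset.card_le_card Finset.inter_subset_right)
    have hv2le : 2 ≤ v.card := le_trans h2B (Finset.card_le_card Finset.inter_subset_right)
    have hdis : ∀ z, z ∈ u → z ∈ v → False := by
      intro z hzu hzv
      have : z ∈ u ∩ v := Finset.mem_inter.2 ⟨hzu, hzv⟩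
      rw [hin] at this
      exact absurd this (Finset.notMem_empty z)
    have huY : u ⊆ Y := hun ▸ Finset.subset_union_left
    have hvY : v ⊆ Y := hun ▸ Finset.subset_union_right
    have hvu : v = Y \ u := by
      ext c
      simp only [Finset.mem_sdiff]
      constructor
      · exact fun hc => ⟨hvY hc, fun hcu => hdis c hcu hc⟩
      · rintro ⟨hcY, hcu⟩
        have := hun ▸ hcY
        simp only [Finset.mem_union] at this
        tauto
    have huv : u = Y \ v := by
      ext c
      simp only [Finset.mem_sdiff]
      constructor
      · exact fun hc => ⟨huY hc, fun hcv => hdis c hc hcv⟩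
      · rintro ⟨hcY, hcv⟩
        have := hun ▸ hcY
        simp only [Finset.mem_union] at this
        tauto
    have h𝒯mem : ({u, v} : Finset (Finset α)) ∈ 𝒯 := Finset.mem_filter.2 ⟨hmem, hrs⟩
    have hT5 : Y.card = 5 := hY5
    rcases (show u.card = 2 ∨ v.card = 2 by omega) with hu2 | hv2
    · -- small part is u ⊆ A
      have hiu : A ∩ u = u := Finset.eq_of_subset_of_card_le Finset.inter_subset_right
        (by rw [hu2]; exact h2A)
      have huA : u ⊆ A := Finset.inter_eq_right.1 hiu
      have hnotB : ¬ u ⊆ B := by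
        intro hsub
        have h1' : (B ∩ u).card = 2 := by rw [Finset.inter_eq_right.2 hsub, hu2]
        have hdisj : Disjoint (B ∩ u) (B ∩ v) := by
          rw [Finset.disjoint_left]
          intro z hz1 hz2
          exact hdis z (Finset.mem_inter.1 hz1).2 (Finset.mem_inter.1 hz2).2
        have hsubB : (B ∩ u) ∪ (B ∩ v) ⊆ B := by
          intro z hz
          simp only [Finset.mem_union, Finset.mem_inter] at hz
          tauto
        have := Finset.card_le_card hsubB
        rw [Finset.card_union_of_disjoint hdisj] at this
        omega
      set s : Finset (Fin 5) := Finset.univ.filter (fun i => g i ∈ u) with hs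
      have himg : s.image g = u := by
        apply subset_antisymm
        · intro c hc
          obtain ⟨i, hi, rfl⟩ := Finset.mem_image.1 hc
          exact (Finset.mem_filter.1 hi).2
        · intro c hc
          have : c ∈ Finset.univ.image g := hgY.symm ▸ huY hc
          obtain ⟨i, -, rfl⟩ := Finset.mem_image.1 this
          exact Finset.mem_image_of_mem g (Finset.mem_filter.2 ⟨Finset.mem_univ i, hc⟩)
      have hs2 : s.card = 2 := by
        have := Finset.card_image_of_injective s hginj
        rw [himg, hu2] at this
        omega
      have hsF : s ∈ F := by
        rw [hF]
        refine Finset.mem_filter.2 ⟨Finset.mem_powersetCard.2 ⟨Finset.subset_univ _, hs2⟩, ?_⟩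
        rw [himg, ← hvu]
        exact h𝒯mem
      refine ⟨s, hsF, Or.inl ⟨?_, ?_⟩⟩
      · intro i hi
        have : g i ∈ A := huA (Finset.mem_filter.1 hi).2
        obtain ⟨j, hj, hji⟩ := Finset.mem_image.1 this
        exact (hginj hji) ▸ hj
      · intro hsub
        have hi2 : s.image g ⊆ B := by rw [hB]; exact Finset.image_subset_image hsub
        exact hnotB (himg ▸ hi2)
    · -- small part is v ⊆ B
      have hiv : B ∩ v = v := Finset.eq_of_subset_of_card_le Finset.inter_subset_right
        (by rw [hv2]; exact h2B)
      have hvB : v ⊆ B := Finset.inter_eq_right.1 hiv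
      have hnotA : ¬ v ⊆ A := by
        intro hsub
        have h1' : (A ∩ v).card = 2 := by rw [Finset.inter_eq_right.2 hsub, hv2]
        have hdisj : Disjoint (A ∩ u) (A ∩ v) := by
          rw [Finset.disjoint_left]
          intro z hz1 hz2
          exact hdis z (Finset.mem_inter.1 hz1).2 (Finset.mem_inter.1 hz2).2
        have hsubA : (A ∩ u) ∪ (A ∩ v) ⊆ A := by
          intro z hz
          simp only [Finset.mem_union, Finset.mem_inter] at hz
          tauto
        have := Finset.card_le_card hsubA
        rw [Finset.card_union_of_disjoint hdisj] at this
        omega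
      set s : Finset (Fin 5) := Finset.univ.filter (fun i => g i ∈ v) with hs
      have himg : s.image g = v := by
        apply subset_antisymm
        · intro c hc
          obtain ⟨i, hi, rfl⟩ := Finset.mem_image.1 hc
          exact (Finset.mem_filter.1 hi).2
        · intro c hc
          have : c ∈ Finset.univ.image g := hgY.symm ▸ hvY hc
          obtain ⟨i, -, rfl⟩ := Finset.mem_image.1 this
          exact Finset.mem_image_of_mem g (Finset.mem_filter.2 ⟨Finset.mem_univ i, hc⟩)
      have hs2 : s.card = 2 := by
        have := Finset.card_image_of_injective s hginj
        rw [himg, hv2] at this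
        omega
      have hsF : s ∈ F := by
        rw [hF]
        refine Finset.mem_filter.2 ⟨Finset.mem_powersetCard.2 ⟨Finset.subset_univ _, hs2⟩, ?_⟩
        rw [himg, ← huv, Finset.pair_comm]
        exact h𝒯mem
      refine ⟨s, hsF, Or.inr ⟨?_, ?_⟩⟩
      · intro i hi
        have : g i ∈ B := hvB (Finset.mem_filter.1 hi).2
        obtain ⟨j, hj, hji⟩ := Finset.mem_image.1 this
        exact (hginj hji) ▸ hj
      · intro hsub
        have hi2 : s.image g ⊆ A := by rw [hA]; exact Finset.image_subset_image hsub
        exact hnotA (himg ▸ hi2)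
  have h5F := L5 F hF2 hFhyp
  refine ⟨𝒯, Finset.filter_subset _ _, ?_, fun T hT => (Finset.mem_filter.1 hT).2⟩
  have hmap : ∀ s ∈ F, ({s.image g, Y \ s.image g} : Finset (Finset α)) ∈ 𝒯 :=
    fun s hs => (Finset.mem_filter.1 hs).2
  have hcard := Finset.card_le_card_of_injOn
    (fun s : Finset (Fin 5) => ({s.image g, Y \ s.image g} : Finset (Finset α))) hmap ?_
  · omega
  · intro s hsmem t htmem heq
    simp only [Finset.mem_coe] at hsmem htmem
    have hs2 : (s.image g).card = 2 := by
      rw [Finset.card_image_of_injective _ hginj]; exact hF2 s hsmem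
    have ht2 : (t.image g).card = 2 := by
      rw [Finset.card_image_of_injective _ hginj]; exact hF2 t htmem
    have htY : t.image g ⊆ Y := hgY ▸ Finset.image_subset_image (Finset.subset_univ _)
    have htd : (Y \ t.image g).card = 3 := by
      rw [Finset.card_sdiff_of_subset htY, ht2, hY5]
    have hne : t.image g ≠ Y \ t.image g := fun h => by rw [← h, ht2] at htd; omega
    rcases pair_cases heq hne with ⟨h1, -⟩ | ⟨h1, -⟩
    · exact Finset.image_injective hginj h1
    · rw [h1] at hs2
      omega

end AuxFive
section AuxFwd

variable {α : Type*} [DecidableEq α]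

lemma phi_from_parts {Y A B : Finset α} (hAY : A ⊆ Y) (hBY : B ⊆ Y)
    {S : Finset (Finset α)} {P Q u v : Finset α} (hPmem : P ∈ S) (hQmem : Q ∈ S) (hPQ : P ≠ Q)
    (hPu : P ∩ Y = u) (hQv : Q ∩ Y = v)
    (h2A : 2 ≤ (A ∩ u).card) (h2B : 2 ≤ (B ∩ v).card) : phiNe A B S := by
  refine ⟨P, hPmem, Q, hQmem, hPQ, ?_, ?_⟩
  · have h : A ∩ P = A ∩ u := by
      rw [← hPu]
      ext c
      simp only [Finset.mem_inter]
      exact ⟨fun hc => ⟨hc.1, hc.2, hAY hc.1⟩, fun hc => ⟨hc.1, hc.2.1⟩⟩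
    rw [h]; exact h2A
  · have h : B ∩ Q = B ∩ v := by
      rw [← hQv]
      ext c
      simp only [Finset.mem_inter]
      exact ⟨fun hc => ⟨hc.1, hc.2, hBY hc.1⟩, fun hc => ⟨hc.1, hc.2.1⟩⟩
    rw [h]; exact h2B

lemma core4 {A B Y u v : Finset α} {a b x y : α}
    (hax : a ≠ x) (hay : a ≠ y) (hbx : b ≠ x) (hby : b ≠ y) (hab : a ≠ b) (hxy : x ≠ y)
    (hAeq : A = {a, x, y}) (hBeq : B = {b, x, y}) (hYeq : Y = {a, b, x, y})
    (hu2 : u.card = 2) (hv2 : v.card = 2) (hun : u ∪ v = Y) (hin : u ∩ v = ∅)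
    (hbad : ({u, v} : Finset (Finset α)) ≠ {({x, y} : Finset α), {a, b}})
    (hau : a ∈ u) : 2 ≤ (A ∩ u).card ∧ 2 ≤ (B ∩ v).card := by
  have hdis : ∀ z, z ∈ u → z ∈ v → False := by
    intro z h1 h2
    have : z ∈ u ∩ v := Finset.mem_inter.2 ⟨h1, h2⟩
    rw [hin] at this
    exact absurd this (Finset.notMem_empty z)
  have huY : u ⊆ Y := hun ▸ Finset.subset_union_left
  have hmemY : ∀ c, c ∈ Y → c ∉ u → c ∈ v := by
    intro c hc hcu
    have := hun ▸ hc
    simp only [Finset.mem_union] at this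
    tauto
  have hxY : x ∈ Y := by rw [hYeq]; simp
  have hyY : y ∈ Y := by rw [hYeq]; simp
  have hbY : b ∈ Y := by rw [hYeq]; simp
  by_cases hbu : b ∈ u
  · exfalso
    have hueq : u = {a, b} := eq_pair_of_subset hau hbu hab hu2
    have hxv : x ∈ v := hmemY x hxY (by
      rw [hueq]; simp only [mem_insert, mem_singleton, not_or]
      exact ⟨fun h => hax h.symm, fun h => hbx h.symm⟩)
    have hyv : y ∈ v := hmemY y hyY (by
      rw [hueq]; simp only [mem_insert, mem_singleton, not_or]
      exact ⟨fun h => hay h.symm, fun h => hby h.symm⟩)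
    have hveq : v = {x, y} := eq_pair_of_subset hxv hyv hxy hv2
    exact hbad (by rw [hueq, hveq, Finset.pair_comm])
  have hbv : b ∈ v := hmemY b hbY hbu
  obtain ⟨z, hza, hueq⟩ := exists_second hu2 hau
  have hzu : z ∈ u := by rw [hueq]; simp
  have hzY : z ∈ Y := huY hzu
  have hzb : z ≠ b := fun h => hbu (h ▸ hzu)
  have hzxy : z = x ∨ z = y := by
    rw [hYeq] at hzY
    simp only [mem_insert, mem_singleton] at hzY
    rcases hzY with rfl | rfl | h | h
    · exact absurd rfl hza
    · exact absurd rfl hzb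
    · exact Or.inl h
    · exact Or.inr h
  obtain ⟨w, hwz, hwa, hbw, hwY, hwA⟩ :
      ∃ w, w ≠ z ∧ w ≠ a ∧ b ≠ w ∧ w ∈ Y ∧ (w = x ∨ w = y) := by
    rcases hzxy with rfl | rfl
    · exact ⟨y, fun h => hxy h.symm, fun h => hay h.symm, hby, hyY, Or.inr rfl⟩
    · exact ⟨x, hxy, fun h => hax h.symm, hbx, hxY, Or.inl rfl⟩
  have hwv : w ∈ v := hmemY w hwY (by
    rw [hueq]; simp only [mem_insert, mem_singleton, not_or]; exact ⟨hwa, hwz⟩)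
  have hveq : v = {b, w} := eq_pair_of_subset hbv hwv hbw hv2
  constructor
  · have huA : u ⊆ A := by
      rw [hueq, hAeq]
      intro c hc
      simp only [mem_insert, mem_singleton] at hc ⊢
      rcases hc with rfl | rfl
      · exact Or.inl rfl
      · rcases hzxy with rfl | rfl
        · exact Or.inr (Or.inl rfl)
        · exact Or.inr (Or.inr rfl)
    rw [Finset.inter_eq_right.2 huA, hu2]
  · have hvB : v ⊆ B := by
      rw [hveq, hBeq]
      intro c hc
      simp only [mem_insert, mem_singleton] at hc ⊢
      rcases hc with rfl | rfl
      · exact Or.inl rfl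
      · rcases hwA with rfl | rfl
        · exact Or.inr (Or.inl rfl)
        · exact Or.inr (Or.inr rfl)
    rw [Finset.inter_eq_right.2 hvB, hv2]

lemma forward_two {X : Finset α} {𝒮 : Finset (Finset (Finset α))}
    (h𝒮 : IsSplitSystem X 𝒮) (hX : 5 ≤ X.card) (h4 : FourDices X 𝒮)
    {A B : Finset α} (hAX : A ⊆ X) (hBX : B ⊆ X) (hA3 : A.card = 3) (hB3 : B.card = 3)
    (hne : A ≠ B) (hk : (A ∩ B).card = 2) : ∃ S ∈ 𝒮, phiNe A B S := by
  obtain ⟨x, y, hxy, hxyeq⟩ := Finset.card_eq_two.1 hk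
  have hsdA : (A \ (A ∩ B)).card = 1 := by
    rw [Finset.card_sdiff_of_subset Finset.inter_subset_left]; omega
  have hsdB : (B \ (A ∩ B)).card = 1 := by
    rw [Finset.card_sdiff_of_subset Finset.inter_subset_right]; omega
  obtain ⟨a, haeq⟩ := Finset.card_eq_one.1 hsdA
  obtain ⟨b, hbeq⟩ := Finset.card_eq_one.1 hsdB
  have hamem : a ∈ A \ (A ∩ B) := by rw [haeq]; simp
  have hbmem : b ∈ B \ (A ∩ B) := by rw [hbeq]; simp
  rw [Finset.mem_sdiff] at hamem hbmem
  have hAeq : A = {a, x, y} := by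
    have h1 : A \ (A ∩ B) ∪ A ∩ (A ∩ B) = A := Finset.sdiff_union_inter A (A ∩ B)
    rw [Finset.inter_eq_right.2 Finset.inter_subset_left] at h1
    rw [← h1, haeq, hxyeq]
    rfl
  have hBeq : B = {b, x, y} := by
    have h1 : B \ (A ∩ B) ∪ B ∩ (A ∩ B) = B := Finset.sdiff_union_inter B (A ∩ B)
    rw [Finset.inter_eq_right.2 Finset.inter_subset_right] at h1
    rw [← h1, hbeq, hxyeq]
    rfl
  have hax : a ≠ x := fun h => hamem.2 (hxyeq ▸ (h ▸ (by simp : x ∈ ({x, y} : Finset α)) : a ∈ ({x, y} : Finset α)))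
  have hay : a ≠ y := fun h => hamem.2 (hxyeq ▸ (h ▸ (by simp : y ∈ ({x, y} : Finset α)) : a ∈ ({x, y} : Finset α)))
  have hbx : b ≠ x := fun h => hbmem.2 (hxyeq ▸ (h ▸ (by simp : x ∈ ({x, y} : Finset α)) : b ∈ ({x, y} : Finset α)))
  have hby : b ≠ y := fun h => hbmem.2 (hxyeq ▸ (h ▸ (by simp : y ∈ ({x, y} : Finset α)) : b ∈ ({x, y} : Finset α)))
  have hab : a ≠ b := by
    intro h
    exact hamem.2 (Finset.mem_inter.2 ⟨hamem.1, h ▸ hbmem.1⟩)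
  have hYeq : A ∪ B = {a, b, x, y} := by
    rw [hAeq, hBeq]
    ext c
    simp only [Finset.mem_union, mem_insert, mem_singleton]
    tauto
  have hYX : A ∪ B ⊆ X := Finset.union_subset hAX hBX
  have hYcard : (A ∪ B).card = 4 := by
    have := Finset.card_union_add_card_inter A B
    omega
  rcases h4 with h | h4
  · omega
  obtain ⟨𝒯, h𝒯sub, h𝒯2, h𝒯rs⟩ := h4 (A ∪ B) hYX hYcard
  obtain ⟨T1, hT1, T2, hT2, hT12⟩ := Finset.one_lt_card.1 h𝒯2
  obtain ⟨T, hT, hTbad⟩ :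
      ∃ T ∈ 𝒯, T ≠ ({({x, y} : Finset α), {a, b}} : Finset (Finset α)) := by
    by_cases hc : T1 = ({({x, y} : Finset α), {a, b}} : Finset (Finset α))
    · exact ⟨T2, hT2, fun h => hT12 (hc.trans h.symm)⟩
    · exact ⟨T1, hT1, hc⟩
  have hTres := h𝒯sub hT
  have hTrs := h𝒯rs T hT
  simp only [restrictSS, Finset.mem_filter, Finset.mem_image] at hTres
  obtain ⟨⟨S, hS, hSrest⟩, -⟩ := hTres
  obtain ⟨⟨u, v, hTuv, hunY, hinY, hune, hvne⟩, -, hmin⟩ := hTrs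
  have hu2le : 2 ≤ u.card := hmin u (hTuv ▸ mem_insert_self u {v})
  have hv2le : 2 ≤ v.card := hmin v (hTuv ▸ mem_insert_of_mem (mem_singleton_self v))
  have hdisjuv : Disjoint u v := Finset.disjoint_iff_inter_eq_empty.2 hinY
  have hsum : u.card + v.card = 4 := by
    rw [← Finset.card_union_of_disjoint hdisjuv, hunY, hYcard]
  have hu2 : u.card = 2 := by omega
  have hv2 : v.card = 2 := by omega
  have huvne : u ≠ v := by
    intro h
    rw [h, Finset.inter_self] at hinY
    exact hvne hinY
  obtain ⟨P, Q, hSeq, hPQun, hPQin, hPne, hQne⟩ := h𝒮.1 S hS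
  have hPmem : P ∈ S := hSeq ▸ mem_insert_self P {Q}
  have hQmem : Q ∈ S := hSeq ▸ mem_insert_of_mem (mem_singleton_self Q)
  have hrest2 : ({P ∩ (A ∪ B), Q ∩ (A ∪ B)} : Finset (Finset α)) = {u, v} := by
    rw [← hTuv, ← hSrest, hSeq]
    simp [restrictSplit, Finset.image_insert]
  have hAY : A ⊆ A ∪ B := Finset.subset_union_left
  have hBY : B ⊆ A ∪ B := Finset.subset_union_right
  have haY : a ∈ A ∪ B := by rw [hYeq]; simp
  refine ⟨S, hS, ?_⟩
  rcases pair_cases hrest2 huvne with ⟨hPu, hQv⟩ | ⟨hPv, hQu⟩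
  · have hPQ : P ≠ Q := fun h => huvne (by rw [← hPu, ← hQv, h])
    have hamem2 := hunY ▸ haY
    simp only [Finset.mem_union] at hamem2
    rcases hamem2 with hau | hav
    · obtain ⟨c1, c2⟩ := core4 hax hay hbx hby hab hxy hAeq hBeq hYeq hu2 hv2 hunY hinY
        (hTuv ▸ hTbad) hau
      exact phi_from_parts hAY hBY hPmem hQmem hPQ hPu hQv c1 c2
    · obtain ⟨c1, c2⟩ := core4 hax hay hbx hby hab hxy hAeq hBeq hYeq hv2 hu2
        (by rw [Finset.union_comm]; exact hunY) (by rw [Finset.inter_comm]; exact hinY)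
        (by rw [Finset.pair_comm]; exact hTuv ▸ hTbad) hav
      exact phi_from_parts hAY hBY hQmem hPmem hPQ.symm hQv hPu c1 c2
  · have hPQ : P ≠ Q := fun h => huvne (by rw [← hPv, ← hQu, h])
    have hamem2 := hunY ▸ haY
    simp only [Finset.mem_union] at hamem2
    rcases hamem2 with hau | hav
    · obtain ⟨c1, c2⟩ := core4 hax hay hbx hby hab hxy hAeq hBeq hYeq hu2 hv2 hunY hinY
        (hTuv ▸ hTbad) hau
      exact phi_from_parts hAY hBY hQmem hPmem hPQ.symm hQu hPv c1 c2
    · obtain ⟨c1, c2⟩ := core4 hax hay hbx hby hab hxy hAeq hBeq hYeq hv2 hu2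
        (by rw [Finset.union_comm]; exact hunY) (by rw [Finset.inter_comm]; exact hinY)
        (by rw [Finset.pair_comm]; exact hTuv ▸ hTbad) hav
      exact phi_from_parts hAY hBY hPmem hQmem hPQ hPv hQu c1 c2

end AuxFwd
section AuxFwdOne

variable {α : Type*} [DecidableEq α]

lemma count_other {B Y u v : Finset α} (hBY : B ⊆ Y) (hun : u ∪ v = Y)
    (hB3 : B.card = 3) (h1 : (B ∩ u).card ≤ 1) : 2 ≤ (B ∩ v).card := by
  have hsub : B ⊆ (B ∩ u) ∪ (B ∩ v) := by
    intro d hd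
    have := hun ▸ hBY hd
    simp only [Finset.mem_union, Finset.mem_inter] at this ⊢
    tauto
  have hc := Finset.card_le_card hsub
  have hle := Finset.card_union_le (B ∩ u) (B ∩ v)
  omega

lemma class5 {u Y : Finset α} {c a1 a2 b1 b2 : α}
    (hca1 : c ≠ a1) (hca2 : c ≠ a2) (hcb1 : c ≠ b1) (hcb2 : c ≠ b2)
    (ha12 : a1 ≠ a2) (hb12 : b1 ≠ b2) (ha1b1 : a1 ≠ b1) (ha1b2 : a1 ≠ b2)
    (ha2b1 : a2 ≠ b1) (ha2b2 : a2 ≠ b2)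
    (hu2 : u.card = 2) (huY : u ⊆ Y) (hYeq : Y = {c, a1, a2, b1, b2})
    (hnA : ¬ u ⊆ ({c, a1, a2} : Finset α)) (hnB : ¬ u ⊆ ({c, b1, b2} : Finset α)) :
    u = {a1, b1} ∨ u = {a1, b2} ∨ u = {a2, b1} ∨ u = {a2, b2} := by
  have hmem : (a1 ∈ u ∧ b1 ∈ u) ∨ (a1 ∈ u ∧ b2 ∈ u) ∨ (a2 ∈ u ∧ b1 ∈ u) ∨
      (a2 ∈ u ∧ b2 ∈ u) := by
    obtain ⟨p, q, hpq, rfl⟩ := Finset.card_eq_two.1 hu2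
    have hp : p = c ∨ p = a1 ∨ p = a2 ∨ p = b1 ∨ p = b2 := by
      have := huY (by simp : p ∈ ({p, q} : Finset α))
      rw [hYeq] at this
      simpa using this
    have hq : q = c ∨ q = a1 ∨ q = a2 ∨ q = b1 ∨ q = b2 := by
      have := huY (by simp : q ∈ ({p, q} : Finset α))
      rw [hYeq] at this
      simpa using this
    rcases hp with rfl | rfl | rfl | rfl | rfl <;> rcases hq with rfl | rfl | rfl | rfl | rfl <;>
      simp_all [Finset.insert_subset_iff]
  rcases hmem with ⟨h1, h2⟩ | ⟨h1, h2⟩ | ⟨h1, h2⟩ | ⟨h1, h2⟩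
  · exact Or.inl (eq_pair_of_subset h1 h2 ha1b1 hu2)
  · exact Or.inr (Or.inl (eq_pair_of_subset h1 h2 ha1b2 hu2))
  · exact Or.inr (Or.inr (Or.inl (eq_pair_of_subset h1 h2 ha2b1 hu2)))
  · exact Or.inr (Or.inr (Or.inr (eq_pair_of_subset h1 h2 ha2b2 hu2)))

lemma forward_one {X : Finset α} {𝒮 : Finset (Finset (Finset α))}
    (h𝒮 : IsSplitSystem X 𝒮) (hX : 5 ≤ X.card) (h5 : FiveDices X 𝒮)
    {A B : Finset α} (hAX : A ⊆ X) (hBX : B ⊆ X) (hA3 : A.card = 3) (hB3 : B.card = 3)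
    (hk : (A ∩ B).card = 1) : ∃ S ∈ 𝒮, phiNe A B S := by
  classical
  obtain ⟨c, hceq⟩ := Finset.card_eq_one.1 hk
  have hsdA : (A \ (A ∩ B)).card = 2 := by
    rw [Finset.card_sdiff_of_subset Finset.inter_subset_left]; omega
  have hsdB : (B \ (A ∩ B)).card = 2 := by
    rw [Finset.card_sdiff_of_subset Finset.inter_subset_right]; omega
  obtain ⟨a1, a2, ha12, haeq⟩ := Finset.card_eq_two.1 hsdA
  obtain ⟨b1, b2, hb12, hbeq⟩ := Finset.card_eq_two.1 hsdB
  have hcA : c ∈ A := Finset.inter_subset_left (hceq ▸ Finset.mem_singleton_self c)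
  have hcB : c ∈ B := Finset.inter_subset_right (hceq ▸ Finset.mem_singleton_self c)
  have ha1m : a1 ∈ A \ (A ∩ B) := haeq ▸ (by simp : a1 ∈ ({a1, a2} : Finset α))
  have ha2m : a2 ∈ A \ (A ∩ B) := haeq ▸ (by simp : a2 ∈ ({a1, a2} : Finset α))
  have hb1m : b1 ∈ B \ (A ∩ B) := hbeq ▸ (by simp : b1 ∈ ({b1, b2} : Finset α))
  have hb2m : b2 ∈ B \ (A ∩ B) := hbeq ▸ (by simp : b2 ∈ ({b1, b2} : Finset α))
  rw [Finset.mem_sdiff] at ha1m ha2m hb1m hb2m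
  have hnotc : ∀ d : α, d ∉ A ∩ B → d ≠ c := by
    intro d hd h
    exact hd (h ▸ (Finset.mem_inter.2 ⟨hcA, hcB⟩))
  have hca1 : c ≠ a1 := fun h => hnotc a1 ha1m.2 h.symm
  have hca2 : c ≠ a2 := fun h => hnotc a2 ha2m.2 h.symm
  have hcb1 : c ≠ b1 := fun h => hnotc b1 hb1m.2 h.symm
  have hcb2 : c ≠ b2 := fun h => hnotc b2 hb2m.2 h.symm
  have hab : ∀ d e : α, d ∈ A \ (A ∩ B) → e ∈ B \ (A ∩ B) → d ≠ e := by
    intro d e hd he h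
    rw [Finset.mem_sdiff] at hd he
    exact hd.2 (Finset.mem_inter.2 ⟨hd.1, h ▸ he.1⟩)
  have ha1b1 : a1 ≠ b1 := hab a1 b1 (haeq ▸ (by simp)) (hbeq ▸ (by simp))
  have ha1b2 : a1 ≠ b2 := hab a1 b2 (haeq ▸ (by simp)) (hbeq ▸ (by simp))
  have ha2b1 : a2 ≠ b1 := hab a2 b1 (haeq ▸ (by simp)) (hbeq ▸ (by simp))
  have ha2b2 : a2 ≠ b2 := hab a2 b2 (haeq ▸ (by simp)) (hbeq ▸ (by simp))
  have hsplitA : ∀ d, d ∈ A ↔ (d = c ∨ d = a1 ∨ d = a2) := by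
    intro d
    constructor
    · intro hd
      by_cases hdB : d ∈ A ∩ B
      · rw [hceq] at hdB; simp only [Finset.mem_singleton] at hdB; exact Or.inl hdB
      · have : d ∈ A \ (A ∩ B) := Finset.mem_sdiff.2 ⟨hd, hdB⟩
        rw [haeq] at this
        simp only [mem_insert, mem_singleton] at this
        tauto
    · rintro (rfl | rfl | rfl)
      exacts [hcA, ha1m.1, ha2m.1]
  have hsplitB : ∀ d, d ∈ B ↔ (d = c ∨ d = b1 ∨ d = b2) := by
    intro d
    constructor
    · intro hd
      by_cases hdB : d ∈ A ∩ B
      · rw [hceq] at hdB; simp only [Finset.mem_singleton] at hdB; exact Or.inl hdB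
      · have : d ∈ B \ (A ∩ B) := Finset.mem_sdiff.2 ⟨hd, hdB⟩
        rw [hbeq] at this
        simp only [mem_insert, mem_singleton] at this
        tauto
    · rintro (rfl | rfl | rfl)
      exacts [hcB, hb1m.1, hb2m.1]
  have hAeq : A = {c, a1, a2} := by
    ext d; rw [hsplitA]; simp
  have hBeq : B = {c, b1, b2} := by
    ext d; rw [hsplitB]; simp
  have hYeq : A ∪ B = {c, a1, a2, b1, b2} := by
    ext d
    simp only [Finset.mem_union, mem_insert, mem_singleton, hsplitA d, hsplitB d]
    tauto
  have hYX : A ∪ B ⊆ X := Finset.union_subset hAX hBX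
  have hYcard : (A ∪ B).card = 5 := by
    have := Finset.card_union_add_card_inter A B
    omega
  rcases h5 with h | h5
  · omega
  obtain ⟨𝒯, h𝒯sub, h𝒯5, h𝒯rs⟩ := h5 (A ∪ B) hYX hYcard
  set Y := A ∪ B with hY
  have hAY : A ⊆ Y := Finset.subset_union_left
  have hBY : B ⊆ Y := Finset.subset_union_right
  by_contra hgoal
  -- every T ∈ 𝒯 has a well-defined small part, which must be "bad"
  set f : Finset (Finset α) → Finset α :=
    fun T => (T.filter (fun w : Finset α => w.card = 2)).sup id with hf
  have hTprop : ∀ T ∈ 𝒯, (f T).card = 2 ∧ f T ⊆ Y ∧ T = {f T, Y \ f T} ∧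
      ¬ f T ⊆ A ∧ ¬ f T ⊆ B := by
    intro T hT
    obtain ⟨⟨u, v, hTuv, hun, hin, hune, hvne⟩, -, hmin⟩ := h𝒯rs T hT
    have hu2le : 2 ≤ u.card := hmin u (hTuv ▸ mem_insert_self u {v})
    have hv2le : 2 ≤ v.card := hmin v (hTuv ▸ mem_insert_of_mem (mem_singleton_self v))
    have hdisjuv : Disjoint u v := Finset.disjoint_iff_inter_eq_empty.2 hin
    have hsum : u.card + v.card = 5 := by
      rw [← Finset.card_union_of_disjoint hdisjuv, hun, hYcard]
    obtain ⟨u', v', hTuv', hun', hin', hu'2, hv'3⟩ :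
        ∃ u' v', T = {u', v'} ∧ u' ∪ v' = Y ∧ u' ∩ v' = ∅ ∧ u'.card = 2 ∧ v'.card = 3 := by
      rcases (show u.card = 2 ∨ v.card = 2 by omega) with h2 | h2
      · exact ⟨u, v, hTuv, hun, hin, h2, by omega⟩
      · exact ⟨v, u, by rw [hTuv, Finset.pair_comm], by rw [Finset.union_comm]; exact hun,
          by rw [Finset.inter_comm]; exact hin, h2, by omega⟩
    have hdis' : ∀ z, z ∈ u' → z ∈ v' → False := by
      intro z h1 h2
      have : z ∈ u' ∩ v' := Finset.mem_inter.2 ⟨h1, h2⟩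
      rw [hin'] at this
      exact absurd this (Finset.notMem_empty z)
    have hu'Y : u' ⊆ Y := hun' ▸ Finset.subset_union_left
    have hv'Y : v' ⊆ Y := hun' ▸ Finset.subset_union_right
    have hfT : f T = u' := by
      simp only [hf]
      have : T.filter (fun w : Finset α => w.card = 2) = {u'} := by
        ext w
        simp only [Finset.mem_filter, Finset.mem_singleton, hTuv', mem_insert, mem_singleton]
        constructor
        · rintro ⟨rfl | rfl, hc⟩
          · rfl
          · omega
        · rintro rfl
          exact ⟨Or.inl rfl, hu'2⟩
      rw [this, Finset.sup_singleton]
      rfl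
    have hv'sd : v' = Y \ u' := by
      ext d
      simp only [Finset.mem_sdiff]
      constructor
      · exact fun hd => ⟨hv'Y hd, fun hdu => hdis' d hdu hd⟩
      · rintro ⟨hdY, hdu⟩
        have := hun' ▸ hdY
        simp only [Finset.mem_union] at this
        tauto
    have hu'v'ne : u' ≠ v' := fun h => by rw [h] at hu'2; omega
    have hTres := h𝒯sub hT
    simp only [restrictSS, Finset.mem_filter, Finset.mem_image] at hTres
    obtain ⟨⟨S, hS, hSrest⟩, -⟩ := hTres
    obtain ⟨P, Q, hSeq, hPQun, hPQin, hPne, hQne⟩ := h𝒮.1 S hS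
    have hrest2 : ({P ∩ Y, Q ∩ Y} : Finset (Finset α)) = {u', v'} := by
      rw [← hTuv', ← hSrest, hSeq]
      simp [restrictSplit, Finset.image_insert]
    obtain ⟨P', Q', hP'mem, hQ'mem, hP'u, hQ'v⟩ :
        ∃ P' Q', P' ∈ S ∧ Q' ∈ S ∧ P' ∩ Y = u' ∧ Q' ∩ Y = v' := by
      rcases pair_cases hrest2 hu'v'ne with ⟨h1, h2⟩ | ⟨h1, h2⟩
      · exact ⟨P, Q, hSeq ▸ mem_insert_self P {Q},
          hSeq ▸ mem_insert_of_mem (mem_singleton_self Q), h1, h2⟩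
      · exact ⟨Q, P, hSeq ▸ mem_insert_of_mem (mem_singleton_self Q),
          hSeq ▸ mem_insert_self P {Q}, h2, h1⟩
    have hP'Q' : P' ≠ Q' := fun h => hu'v'ne (by rw [← hP'u, ← hQ'v, h])
    refine ⟨by rw [hfT]; exact hu'2, by rw [hfT]; exact hu'Y, ?_, ?_, ?_⟩
    · rw [hfT, ← hv'sd]; exact hTuv'
    · rw [hfT]
      intro hsub
      have c1 : 2 ≤ (A ∩ u').card := by rw [Finset.inter_eq_right.2 hsub, hu'2]
      have hBu : (B ∩ u').card ≤ 1 := by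
        have hss : B ∩ u' ⊆ A ∩ B := by
          intro d hd
          rw [Finset.mem_inter] at hd ⊢
          exact ⟨hsub hd.2, hd.1⟩
        have := Finset.card_le_card hss
        omega
      have c2 : 2 ≤ (B ∩ v').card := count_other hBY hun' hB3 hBu
      exact hgoal ⟨S, hS, phi_from_parts hAY hBY hP'mem hQ'mem hP'Q' hP'u hQ'v c1 c2⟩
    · rw [hfT]
      intro hsub
      have c1 : 2 ≤ (B ∩ u').card := by rw [Finset.inter_eq_right.2 hsub, hu'2]
      have hAu : (A ∩ u').card ≤ 1 := by
        have hss : A ∩ u' ⊆ A ∩ B := by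
          intro d hd
          rw [Finset.mem_inter] at hd ⊢
          exact ⟨hd.1, hsub hd.2⟩
        have := Finset.card_le_card hss
        omega
      have c2 : 2 ≤ (A ∩ v').card := count_other hAY hun' hA3 hAu
      exact hgoal ⟨S, hS, phi_from_parts hAY hBY hQ'mem hP'mem hP'Q'.symm hQ'v hP'u c2 c1⟩
  set Bad : Finset (Finset α) := {({a1, b1} : Finset α), {a1, b2}, {a2, b1}, {a2, b2}}
    with hBad
  have hmap : ∀ T ∈ 𝒯, f T ∈ Bad := by
    intro T hT
    obtain ⟨h2, hYsub, -, hnA, hnB⟩ := hTprop T hT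
    rcases class5 hca1 hca2 hcb1 hcb2 ha12 hb12 ha1b1 ha1b2 ha2b1 ha2b2 h2 hYsub hYeq
      (by rw [← hAeq]; exact hnA) (by rw [← hBeq]; exact hnB) with h | h | h | h <;>
      rw [hBad, h] <;> simp
  have hinj𝒯 : Set.InjOn f ↑𝒯 := by
    intro T hT T' hT' heq
    simp only [Finset.mem_coe] at hT hT'
    have h1 := (hTprop T hT).2.2.1
    have h2 := (hTprop T' hT').2.2.1
    rw [h1, h2, heq]
  have hcard := Finset.card_le_card_of_injOn f hmap hinj𝒯
  have e1 : ({({a2, b2} : Finset α)} : Finset (Finset α)).card = 1 := Finset.card_singleton _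
  have e2 := Finset.card_insert_le ({a2, b1} : Finset α)
    ({({a2, b2} : Finset α)} : Finset (Finset α))
  have e3 := Finset.card_insert_le ({a1, b2} : Finset α)
    (insert ({a2, b1} : Finset α) {({a2, b2} : Finset α)})
  have e4 := Finset.card_insert_le ({a1, b1} : Finset α)
    (insert ({a1, b2} : Finset α) (insert ({a2, b1} : Finset α) {({a2, b2} : Finset α)}))
  have hBad4 : Bad.card ≤ 4 := by
    rw [hBad]
    omega
  omega

end AuxFwdOne
/-- For a split system `𝒮` on `X` (`|X| ≥ 5`): `𝒮` both 4-dices and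
5-dices `X` iff for all distinct 3-subsets `A, B` of `X` with `A ∩ B ≠ ∅` we have
`φ_A ≠ φ_B`. -/
theorem statement11 (X : Finset α) (hX : 5 ≤ X.card)
    (𝒮 : Finset (Finset (Finset α))) (h𝒮 : IsSplitSystem X 𝒮) :
    (FourDices X 𝒮 ∧ FiveDices X 𝒮) ↔
      ∀ A B : Finset α, A ⊆ X → B ⊆ X → A.card = 3 → B.card = 3 → A ≠ B →
        (A ∩ B).Nonempty → ∃ S ∈ 𝒮, phiNe A B S := by
  constructor
  · rintro ⟨h4, h5⟩ A B hAX hBX hA3 hB3 hne hNon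
    have h1 : 1 ≤ (A ∩ B).card := Finset.card_pos.2 hNon
    have h3 : (A ∩ B).card ≤ 3 :=
      le_trans (Finset.card_le_card Finset.inter_subset_left) (le_of_eq hA3)
    have hne3 : (A ∩ B).card ≠ 3 := by
      intro h
      have hABA : A ∩ B = A :=
        Finset.eq_of_subset_of_card_le Finset.inter_subset_left (by omega)
      have hAB : A ⊆ B := by rw [← hABA]; exact Finset.inter_subset_right
      exact hne (Finset.eq_of_subset_of_card_le hAB (by omega))
    rcases (show (A ∩ B).card = 1 ∨ (A ∩ B).card = 2 by omega) with hk | hk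
    · exact forward_one h𝒮 hX h5 hAX hBX hA3 hB3 hk
    · exact forward_two h𝒮 hX h4 hAX hBX hA3 hB3 hne hk
  · intro hinj
    exact ⟨fourdices_rev h𝒮 hinj, fivedices_rev h𝒮 hinj⟩

end InjectiveSplitSystems
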